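/- arXiv:1804.08810 — 4 statements merged into one kernel-verified Lean document; each statement's English description precedes it below -/
import Mathlib

section
/- For every constant c0 > 0 there is an N_0 such that for all even N ≥ N_0 the following holds. Let 1/10 < α ≤ 1/2 be such that d = ⌈N^α⌉ divides N, and let t ≤ N^{c0}. Let g ∈ G[X] be the Raz–Yehudayoff polynomial on X = {x_1,…,x_N}. Suppose g = f_1 + ⋯ + f_m where each f_i is computed over G by an α-sparse ROABP of width at most s and sparsity t, with s < 2^{N^{9/40}/log N}. Then m ≥ 2^{N^{1/11}}. -/
open MvPolynomial

noncomputable section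

/-- A multilinear polynomial: every exponent is at most 1. -/
def MLin {σ : Type*} {K : Type*} [CommSemiring K] (f : MvPolynomial σ K) : Prop :=
  ∀ d ∈ f.support, ∀ i, d i ≤ 1

/-- The partial derivative matrix of a multilinear polynomial over Y ∪ Z
(Y = `inl`-variables, Z = `inr`-variables), rows and columns indexed by subsets. -/
def pdm {h : ℕ} {K : Type*} [CommSemiring K] (f : MvPolynomial (Fin h ⊕ Fin h) K) :
    Matrix (Finset (Fin h)) (Finset (Fin h)) K := fun S T =>
  f.coeff ((∑ i ∈ S, Finsupp.single (Sum.inl i) 1) + ∑ j ∈ T, Finsupp.single (Sum.inr j) 1)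

/-- The field G = F(W), the field of rational functions over F in variables
`w_{i,k,j}`, `i,k,j ∈ ℕ`. -/
abbrev Gf (F : Type*) [Field F] : Type _ := FractionRing (MvPolynomial (ℕ × ℕ × ℕ) F)

/-- The element w_{i,k,j} of G. -/
def wv (F : Type*) [Field F] (i k j : ℕ) : Gf F :=
  algebraMap (MvPolynomial (ℕ × ℕ × ℕ) F) (Gf F) (MvPolynomial.X (i, k, j))

/-- The Raz–Yehudayoff polynomials `g_{i,j}` (first argument is fuel; every
recursive call reduces `j - i` by at least 2, so fuel `N` suffices for `g_{1,N}`). -/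
def RY (F : Type*) [Field F] : ℕ → ℕ → ℕ → MvPolynomial ℕ (Gf F)
  | 0, _, _ => 1
  | fuel + 1, i, j =>
      if j < i then 1
      else (1 + X i * X j) * RY F fuel (i + 1) (j - 1)
        + ∑ k ∈ (Finset.Icc (i + 1) (j - 2)).filter (fun k => (k - i) % 2 = 1),
            C (wv F i k j) * RY F fuel i k * RY F fuel (k + 1) j

/-- The Raz–Yehudayoff polynomial `g = g_{1,N}`, in the variables `x_1, …, x_N`. -/
def razPoly (F : Type*) [Field F] (N : ℕ) : MvPolynomial ℕ (Gf F) := RY F N 1 N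

/-- `|φ(S) ∩ Y|` for a partition function φ. -/
def yCount {h : ℕ} (φ : ℕ → Fin h ⊕ Fin h) (S : Finset ℕ) : ℕ :=
  (S.filter fun x => (φ x).isLeft = true).card

/-- `|φ(S) ∩ Z|` for a partition function φ. -/
def zCount {h : ℕ} (φ : ℕ → Fin h ⊕ Fin h) (S : Finset ℕ) : ℕ :=
  (S.filter fun x => (φ x).isRight = true).card

/-- `S` is `k`-unbalanced with respect to the partition φ. -/
def kUnb {h : ℕ} (φ : ℕ → Fin h ⊕ Fin h) (k : ℕ) (S : Finset ℕ) : Prop :=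
  (k : ℤ) ≤ |(yCount φ S : ℤ) - (zCount φ S : ℤ)|

/-- Extension of a partition given on `X` to all of ℕ (junk value elsewhere). -/
def extPart {h : ℕ} (hh : 0 < h) (X : Finset ℕ) (e : {x // x ∈ X} → Fin h ⊕ Fin h) :
    ℕ → Fin h ⊕ Fin h := fun x =>
  if hx : x ∈ X then e ⟨x, hx⟩ else Sum.inl ⟨0, hh⟩

/-- Probability of an event under the uniform distribution on a finite type. -/
def unifProb {Ω : Type*} [Fintype Ω] (p : Ω → Prop) : ℝ :=
  haveI := Classical.decPred p
  ((Finset.univ.filter p).card : ℝ) / (Fintype.card Ω : ℝ)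

/-- The (1,1) entry of the product `M 0 * M 1 * ⋯ * M (n-1)`. -/
def mprodVal {K : Type*} [CommSemiring K] {n w : ℕ} (hw : 0 < w)
    (M : Fin n → Matrix (Fin w) (Fin w) (MvPolynomial ℕ K)) : MvPolynomial ℕ K :=
  (List.ofFn M).prod ⟨0, hw⟩ ⟨0, hw⟩

/-- An oblivious read-once ABP of width `w` in variables `x_1, …, x_N` with
variable order π (a permutation of `{1, …, N}`): the ℓ-th layer matrix has
entries of degree at most 1 in the single variable `x_{π(ℓ)}`. -/
def IsROABP {K : Type*} [CommSemiring K] (N w : ℕ) (π : ℕ → ℕ)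
    (M : Fin N → Matrix (Fin w) (Fin w) (MvPolynomial ℕ K)) : Prop :=
  Set.BijOn π (Set.Icc 1 N) (Set.Icc 1 N) ∧
    ∀ ℓ : Fin N, ∀ i j, ∃ a b : K, M ℓ i j = C a + C b * X (π (ℓ.val + 1))

/-- An `r`-pass syntactically multilinear ABP of width `w`. -/
def IsRPass {K : Type*} [CommSemiring K] (N w r : ℕ) (π : Fin r → ℕ → ℕ)
    (M : Fin (r * N) → Matrix (Fin w) (Fin w) (MvPolynomial ℕ K)) : Prop :=
  (∀ j, Set.BijOn (π j) (Set.Icc 1 N) (Set.Icc 1 N)) ∧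
  (∀ ℓ : Fin (r * N), ∀ i j, ∃ a b : K,
      M ℓ i j = C a + C b *
        X (π ⟨ℓ.val / N, Nat.div_lt_of_lt_mul (by rw [Nat.mul_comm N r]; exact ℓ.2)⟩
            (ℓ.val % N + 1))) ∧
  (∀ (idx : Fin (r * N + 1) → Fin w) (v : ℕ) (ℓ₁ ℓ₂ : Fin (r * N)),
      v ∈ (M ℓ₁ (idx ℓ₁.castSucc) (idx ℓ₁.succ)).vars →
      v ∈ (M ℓ₂ (idx ℓ₂.castSucc) (idx ℓ₂.succ)).vars → ℓ₁ = ℓ₂)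

/-- An α-sparse ROABP with variable blocks `Xs 0, …, Xs (d-1)`, width `w` and
sparsity `t`: every entry of the `i`-th matrix is a multilinear polynomial in the
variables `Xs i` with at most `t` monomials. -/
def IsSparseROABP {K : Type*} [CommSemiring K] {d : ℕ} (w t : ℕ)
    (Xs : Fin d → Finset ℕ) (M : Fin d → Matrix (Fin w) (Fin w) (MvPolynomial ℕ K)) : Prop :=
  ∀ ℓ i j, MLin (M ℓ i j) ∧ (M ℓ i j).vars ⊆ Xs ℓ ∧ (M ℓ i j).support.card ≤ t


namespace RYAux

open MvPolynomial Real Finset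

lemma supp_one (K : Type*) [CommSemiring K] [Nontrivial K] :
    (1 : MvPolynomial ℕ K).support = {0} := by
  classical
  rw [← C_1, C_apply, support_monomial, if_neg one_ne_zero]

lemma supp_card_mul {K : Type*} [CommSemiring K] (p q : MvPolynomial ℕ K) :
    (p * q).support.card ≤ p.support.card * q.support.card :=
  le_trans (Finset.card_le_card (MvPolynomial.support_mul p q)) Finset.card_add_le

lemma supp_card_sum {K : Type*} [CommSemiring K] {ι : Type*} (s : Finset ι)
    (f : ι → MvPolynomial ℕ K) :
    (∑ i ∈ s, f i).support.card ≤ ∑ i ∈ s, (f i).support.card :=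
  le_trans (Finset.card_le_card MvPolynomial.support_sum) Finset.card_biUnion_le

lemma prod_entry_supp {K : Type*} [CommSemiring K] [Nontrivial K] {w t : ℕ}
    (L : List (Matrix (Fin w) (Fin w) (MvPolynomial ℕ K)))
    (hL : ∀ A ∈ L, ∀ i j, (A i j).support.card ≤ t) :
    ∀ i j, ((L.prod) i j).support.card ≤ (w * t) ^ L.length := by
  induction L with
  | nil =>
    intro i j
    simp only [List.prod_nil, List.length_nil, pow_zero]
    by_cases h : i = j
    · simp [Matrix.one_apply, h, supp_one]
    · simp [Matrix.one_apply, h]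
  | cons A L ih =>
    intro i j
    have hA : ∀ i j, (A i j).support.card ≤ t := hL A List.mem_cons_self
    have hL' : ∀ B ∈ L, ∀ i j, (B i j).support.card ≤ t :=
      fun B hB => hL B (List.mem_cons_of_mem A hB)
    calc ((A :: L).prod i j).support.card
        = ((∑ k, A i k * L.prod k j)).support.card := by
          rw [List.prod_cons, Matrix.mul_apply]
      _ ≤ ∑ k : Fin w, (A i k * L.prod k j).support.card := supp_card_sum _ _
      _ ≤ ∑ _k : Fin w, t * (w * t) ^ L.length := by
          refine Finset.sum_le_sum fun k _ => ?_
          exact le_trans (supp_card_mul _ _)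
            (Nat.mul_le_mul (hA i k) (ih hL' k j))
      _ = w * (t * (w * t) ^ L.length) := by
          simp [Finset.sum_const, Finset.card_univ, Nat.mul_assoc]
      _ = (w * t) ^ (A :: L).length := by
          simp [List.length_cons, pow_succ]
          ring
  
lemma supp_pair_step {F : Type*} [Field F] (p : MvPolynomial ℕ F) (a b : ℕ)
    (hab : a ≠ b) (ha : a ∉ p.vars) :
    (p * (1 + X a * X b)).support.card = 2 * p.support.card := by
  have h1 : p * (1 + X a * X b) = p + p * X a * X b := by ring
  have hs : (p * X a * X b).support
      = (p.support.map (addRightEmbedding (Finsupp.single a 1))).map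
          (addRightEmbedding (Finsupp.single b 1)) := by
    rw [support_mul_X, support_mul_X]
  have hma : ∀ m ∈ p.support, m a = 0 := by
    intro m hm
    by_contra h
    exact ha ((mem_vars a).2 ⟨m, hm, Finsupp.mem_support_iff.2 h⟩)
  have hdisj : Disjoint p.support (p * X a * X b).support := by
    rw [Finset.disjoint_left]
    intro m hm hm'
    rw [hs] at hm'
    simp only [Finset.mem_map, addRightEmbedding_apply] at hm'
    obtain ⟨_, ⟨m0, hm0, rfl⟩, rfl⟩ := hm'
    have h0 := hma _ hm
    simp [Finsupp.single_apply, hab, Ne.symm hab] at h0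
  have hadd : (p + p * X a * X b).support = p.support ∪ (p * X a * X b).support :=
    Finsupp.support_add_eq hdisj
  rw [h1, hadd, Finset.card_union_of_disjoint hdisj, hs]
  simp [Finset.card_map]
  ring

lemma supp_card_prod {F : Type*} [Field F] (a b : ℕ → ℕ) (n : ℕ)
    (hd : ∀ r, r < n → ∀ r', r' < n → a r ≠ b r' ∧ (r ≠ r' → a r ≠ a r')) :
    ((∏ r ∈ Finset.range n, (1 + X (a r) * X (b r)) : MvPolynomial ℕ F)).support.card
      = 2 ^ n := by
  induction n with
  | zero => simp [supp_one]
  | succ n ih =>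
    have hfac : ∀ r : ℕ, ((1 : MvPolynomial ℕ F) + X (a r) * X (b r)).vars
        ⊆ {a r, b r} := by
      intro r
      refine (vars_add_subset _ _).trans ?_
      rw [vars_one]
      simp only [Finset.empty_union]
      refine (vars_mul _ _).trans ?_
      rw [vars_X, vars_X]
      intro x hx
      simp only [Finset.mem_union, Finset.mem_singleton] at hx
      simp only [Finset.mem_insert, Finset.mem_singleton]
      tauto
    have hvars : (∏ r ∈ Finset.range n, (1 + X (a r) * X (b r)) : MvPolynomial ℕ F).vars
        ⊆ (Finset.range n).biUnion (fun r => {a r, b r}) := by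
      refine (vars_prod _).trans ?_
      intro x hx
      rw [Finset.mem_biUnion] at hx ⊢
      obtain ⟨r, hr, hxr⟩ := hx
      exact ⟨r, hr, hfac r hxr⟩
    have hnotin : a n ∉ (∏ r ∈ Finset.range n, (1 + X (a r) * X (b r)) :
        MvPolynomial ℕ F).vars := by
      intro hmem
      have := hvars hmem
      simp only [Finset.mem_biUnion, Finset.mem_range, Finset.mem_insert,
        Finset.mem_singleton] at this
      obtain ⟨r, hr, hcase⟩ := this
      rcases hcase with h | h
      · exact ((hd n (Nat.lt_succ_self n) r (Nat.lt_succ_of_lt hr)).2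
          (by omega)) h
      · exact (hd n (Nat.lt_succ_self n) r (Nat.lt_succ_of_lt hr)).1 h
    rw [Finset.prod_range_succ,
      supp_pair_step _ _ _ ((hd n (Nat.lt_succ_self n) n (Nat.lt_succ_self n)).1) hnotin,
      ih (fun r hr r' hr' => hd r (Nat.lt_succ_of_lt hr) r' (Nat.lt_succ_of_lt hr'))]
    ring

/-- `RY` with coefficients in the polynomial ring (before passing to the
fraction field). -/
def RYp (F : Type*) [Field F] : ℕ → ℕ → ℕ → MvPolynomial ℕ (MvPolynomial (ℕ × ℕ × ℕ) F)
  | 0, _, _ => 1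
  | fuel + 1, i, j =>
      if j < i then 1
      else (1 + X i * X j) * RYp F fuel (i + 1) (j - 1)
        + ∑ k ∈ (Finset.Icc (i + 1) (j - 2)).filter (fun k => (k - i) % 2 = 1),
            C (MvPolynomial.X (i, k, j)) * RYp F fuel i k * RYp F fuel (k + 1) j

/-- `RY` with all `w`-variables sent to `0`. -/
def Qp (F : Type*) [Field F] : ℕ → ℕ → ℕ → MvPolynomial ℕ F
  | 0, _, _ => 1
  | fuel + 1, i, j =>
      if j < i then 1
      else (1 + X i * X j) * Qp F fuel (i + 1) (j - 1)

set_option synthInstance.maxHeartbeats 1000000 in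
lemma map_RYp (F : Type*) [Field F] (fuel : ℕ) : ∀ i j,
    MvPolynomial.map (algebraMap (MvPolynomial (ℕ × ℕ × ℕ) F) (Gf F)) (RYp F fuel i j)
      = RY F fuel i j := by
  induction fuel with
  | zero => intro i j; simp [RYp, RY]
  | succ n ih =>
    intro i j
    rw [RYp, RY]
    split
    · simp
    · simp only [map_add, map_mul, map_one, map_sum, MvPolynomial.map_X,
        MvPolynomial.map_C, ih, wv]

set_option synthInstance.maxHeartbeats 1000000 in
lemma map_RYp_zero (F : Type*) [Field F] (fuel : ℕ) : ∀ i j,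
    MvPolynomial.map (constantCoeff (R := F)) (RYp F fuel i j) = Qp F fuel i j := by
  induction fuel with
  | zero => intro i j; simp [RYp, Qp]
  | succ n ih =>
    intro i j
    rw [RYp, Qp]
    split
    · simp
    · simp only [map_add, map_mul, map_one, map_sum, MvPolynomial.map_X,
        MvPolynomial.map_C, ih, constantCoeff_X, map_zero, C_0, zero_mul, mul_zero,
        Finset.sum_const_zero, add_zero]

lemma Qp_of_lt (F : Type*) [Field F] (fuel i j : ℕ) (h : j < i) : Qp F fuel i j = 1 := by
  cases fuel <;> simp [Qp, h]

lemma Qp_eq_prod (F : Type*) [Field F] : ∀ fuel i j : ℕ, i ≤ j → (j - i) % 2 = 1 →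
    (j - i) / 2 < fuel →
    Qp F fuel i j = ∏ r ∈ Finset.range ((j - i + 1) / 2), (1 + X (i + r) * X (j - r)) := by
  intro fuel
  induction fuel with
  | zero => intro i j _ _ h; omega
  | succ n ih =>
    intro i j hij hpar hfuel
    rw [Qp, if_neg (by omega)]
    by_cases hj : j = i + 1
    · subst hj
      rw [show i + 1 - 1 = i by omega, Qp_of_lt F n (i + 1) i (by omega)]
      rw [show (i + 1 - i + 1) / 2 = 1 by omega, Finset.prod_range_one]
      simp
    · have h3 : i + 3 ≤ j := by omega
      rw [ih (i + 1) (j - 1) (by omega) (by omega) (by omega)]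
      rw [show (j - i + 1) / 2 = (j - 1 - (i + 1) + 1) / 2 + 1 by omega,
        Finset.prod_range_succ']
      rw [mul_comm]
      congr 1
      refine Finset.prod_congr rfl fun r _ => ?_
      rw [show i + 1 + r = i + (r + 1) by omega, show j - 1 - r = j - (r + 1) by omega]

lemma razPoly_supp (F : Type*) [Field F] (N : ℕ) (h2 : 2 ≤ N) (hev : Even N) :
    2 ^ (N / 2) ≤ (razPoly F N).support.card := by
  obtain ⟨h, hN⟩ := hev
  have hinj : Function.Injective (algebraMap (MvPolynomial (ℕ × ℕ × ℕ) F) (Gf F)) :=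
    IsFractionRing.injective _ _
  have e1 : (razPoly F N).support = (RYp F N 1 N).support := by
    rw [razPoly, ← map_RYp, support_map_of_injective _ hinj]
  have e2 : (MvPolynomial.map (constantCoeff (R := F)) (RYp F N 1 N)).support.card
      = 2 ^ (N / 2) := by
    rw [map_RYp_zero, Qp_eq_prod F N 1 N (by omega) (by omega) (by omega),
      show (N - 1 + 1) / 2 = N / 2 by omega]
    exact supp_card_prod (fun r => 1 + r) (fun r => N - r) (N / 2)
      (by intro r hr r' hr'; constructor <;> omega)
  rw [e1, ← e2]
  exact Finset.card_le_card (support_map_subset _ _)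

lemma analytic (c0 : ℝ) (hc0 : 0 < c0) :
    ∃ N₀ : ℕ, 2 ≤ N₀ ∧ ∀ N : ℕ, N₀ ≤ N → ∀ D : ℝ, 0 ≤ D → D ≤ (N : ℝ) ^ ((1:ℝ)/2) + 1 →
      (N : ℝ) ^ ((1:ℝ)/11) + (N : ℝ) ^ ((9:ℝ)/40) / Real.logb 2 (N : ℝ) * D
        + Real.logb 2 (N : ℝ) * (c0 * D) ≤ (N : ℝ) / 2 := by
  set C : ℝ := 3 + 16 * c0 / Real.log 2 with hC
  have hlog2 : (0:ℝ) < Real.log 2 := Real.log_pos one_lt_two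
  have hCpos : 0 < C := by positivity
  have hev : ∀ᶠ x : ℝ in Filter.atTop, 2 * C ≤ x ^ ((11:ℝ)/40) :=
    (tendsto_rpow_atTop (by norm_num : (0:ℝ) < 11/40)).eventually_ge_atTop (2 * C)
  obtain ⟨x₀, hx₀⟩ := Filter.eventually_atTop.mp hev
  refine ⟨max 2 (⌈x₀⌉₊ + 1), le_max_left _ _, ?_⟩
  intro N hN D hD0 hD
  set x : ℝ := (N : ℝ) with hxdef
  have hx2 : (2:ℝ) ≤ x := by
    have h1 : 2 ≤ N := le_trans (le_max_left _ _) hN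
    rw [hxdef]
    exact_mod_cast h1
  have hx1 : (1:ℝ) ≤ x := by linarith
  have hx0 : (0:ℝ) < x := by linarith
  have hxx0 : x₀ ≤ x := by
    have h1 : ⌈x₀⌉₊ + 1 ≤ N := le_trans (le_max_right _ _) hN
    have h2 : ((⌈x₀⌉₊ + 1 : ℕ) : ℝ) ≤ x := by rw [hxdef]; exact_mod_cast h1
    have h3 := Nat.le_ceil x₀
    push_cast at h2
    linarith
  have hkey : 2 * C ≤ x ^ ((11:ℝ)/40) := hx₀ x hxx0
  have hL1 : 1 ≤ Real.logb 2 x := by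
    rw [Real.logb, le_div_iff₀ hlog2]
    have := Real.log_le_log (by norm_num : (0:ℝ) < 2) hx2
    linarith
  have hDle : D ≤ 2 * x ^ ((1:ℝ)/2) := by
    have h1 : (1:ℝ) ≤ x ^ ((1:ℝ)/2) := Real.one_le_rpow hx1 (by norm_num)
    linarith
  have t1 : x ^ ((1:ℝ)/11) ≤ x ^ ((29:ℝ)/40) :=
    Real.rpow_le_rpow_of_exponent_le hx1 (by norm_num)
  have h940 : (0:ℝ) ≤ x ^ ((9:ℝ)/40) := Real.rpow_nonneg hx0.le _
  have t2 : x ^ ((9:ℝ)/40) / Real.logb 2 x * D ≤ 2 * x ^ ((29:ℝ)/40) := by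
    have h1 : x ^ ((9:ℝ)/40) / Real.logb 2 x ≤ x ^ ((9:ℝ)/40) :=
      div_le_self h940 hL1
    have h2 : x ^ ((9:ℝ)/40) * (2 * x ^ ((1:ℝ)/2)) = 2 * x ^ ((29:ℝ)/40) := by
      rw [mul_comm (2:ℝ) (x ^ ((1:ℝ)/2)), ← mul_assoc, ← Real.rpow_add hx0]
      norm_num [mul_comm]
    calc x ^ ((9:ℝ)/40) / Real.logb 2 x * D
        ≤ x ^ ((9:ℝ)/40) * (2 * x ^ ((1:ℝ)/2)) :=
          mul_le_mul h1 hDle hD0 h940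
      _ = 2 * x ^ ((29:ℝ)/40) := h2
  have t3 : Real.logb 2 x * (c0 * D) ≤ 16 * c0 / Real.log 2 * x ^ ((29:ℝ)/40) := by
    have hlx : Real.log x ≤ 8 * x ^ ((1:ℝ)/8) := by
      have := Real.log_le_rpow_div hx0.le (by norm_num : (0:ℝ) < 1/8)
      calc Real.log x ≤ x ^ ((1:ℝ)/8) / (1/8) := this
        _ = 8 * x ^ ((1:ℝ)/8) := by ring
    have h18 : (0:ℝ) ≤ x ^ ((1:ℝ)/8) := Real.rpow_nonneg hx0.le _
    have hlb : Real.logb 2 x ≤ 8 * x ^ ((1:ℝ)/8) / Real.log 2 := by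
      rw [Real.logb]
      exact (div_le_div_iff_of_pos_right hlog2).mpr hlx
    have hcD : c0 * D ≤ c0 * (2 * x ^ ((1:ℝ)/2)) :=
      mul_le_mul_of_nonneg_left hDle hc0.le
    have hlbpos : (0:ℝ) ≤ Real.logb 2 x := by linarith
    have step : Real.logb 2 x * (c0 * D)
        ≤ (8 * x ^ ((1:ℝ)/8) / Real.log 2) * (c0 * (2 * x ^ ((1:ℝ)/2))) := by
      apply mul_le_mul hlb hcD (by positivity) (by positivity)
    have hxe : x ^ ((1:ℝ)/8) * x ^ ((1:ℝ)/2) = x ^ ((5:ℝ)/8) := by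
      rw [← Real.rpow_add hx0]; norm_num
    have hx58 : x ^ ((5:ℝ)/8) ≤ x ^ ((29:ℝ)/40) :=
      Real.rpow_le_rpow_of_exponent_le hx1 (by norm_num)
    calc Real.logb 2 x * (c0 * D)
        ≤ (8 * x ^ ((1:ℝ)/8) / Real.log 2) * (c0 * (2 * x ^ ((1:ℝ)/2))) := step
      _ = 16 * c0 / Real.log 2 * (x ^ ((1:ℝ)/8) * x ^ ((1:ℝ)/2)) := by ring
      _ = 16 * c0 / Real.log 2 * x ^ ((5:ℝ)/8) := by rw [hxe]
      _ ≤ 16 * c0 / Real.log 2 * x ^ ((29:ℝ)/40) := by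
          apply mul_le_mul_of_nonneg_left hx58 (by positivity)
  have total : x ^ ((1:ℝ)/11) + x ^ ((9:ℝ)/40) / Real.logb 2 x * D
      + Real.logb 2 x * (c0 * D) ≤ C * x ^ ((29:ℝ)/40) := by
    rw [hC]
    have := t1
    nlinarith [Real.rpow_nonneg hx0.le ((29:ℝ)/40)]
  have hfin : C * x ^ ((29:ℝ)/40) ≤ x / 2 := by
    have h1 : x ^ ((11:ℝ)/40) * x ^ ((29:ℝ)/40) = x := by
      rw [← Real.rpow_add hx0]
      norm_num
    nlinarith [Real.rpow_nonneg hx0.le ((29:ℝ)/40), hkey]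
  linarith

end RYAux

/-- Theorem (sum of α-sparse ROABPs lower bound). -/
theorem sum_of_sparse_roabp_lower_bound (c₀ : ℝ) (hc₀ : 0 < c₀) :
    ∃ N₀ : ℕ, ∀ (F : Type) [Field F] (N : ℕ), N₀ ≤ N → Even N →
      ∀ (α : ℝ), 1/10 < α → α ≤ 1/2 →
      ∀ (d : ℕ), d = ⌈(N : ℝ) ^ α⌉₊ → d ∣ N →
      ∀ (t s : ℕ), (t : ℝ) ≤ (N : ℝ) ^ c₀ →
        (s : ℝ) < 2 ^ ((N : ℝ) ^ ((9 : ℝ)/40) / Real.logb 2 N) →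
      ∀ (m : ℕ) (sw : Fin m → ℕ) (hsw : ∀ i, 1 ≤ sw i), (∀ i, sw i ≤ s) →
      ∀ (Xs : Fin m → Fin d → Finset ℕ)
        (M : (i : Fin m) → Fin d → Matrix (Fin (sw i)) (Fin (sw i)) (MvPolynomial ℕ (Gf F))),
        (∀ i, ∀ j j' : Fin d, j ≠ j' → Disjoint (Xs i j) (Xs i j')) →
        (∀ i, Finset.univ.biUnion (Xs i) = Finset.Icc 1 N) →
        (∀ i j, (Xs i j).card = N / d) →
        (∀ i, IsSparseROABP (sw i) t (Xs i) (M i)) →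
        razPoly F N = ∑ i : Fin m, mprodVal (show 0 < sw i from hsw i) (M i) →
        (2 : ℝ) ^ ((N : ℝ) ^ ((1 : ℝ)/11)) ≤ (m : ℝ) := by
  obtain ⟨N₀, hN₀2, hN₀⟩ := RYAux.analytic c₀ hc₀
  refine ⟨N₀, ?_⟩
  intro F _ N hNN hev α hα1 hα2 d hd hdvd t s hts hs m sw hsw hsws Xs M _ _ _ hro hsum
  have hN2 : 2 ≤ N := le_trans hN₀2 hNN
  have hx0 : (0:ℝ) < (N : ℝ) := by exact_mod_cast (by omega : 0 < N)
  have hx1 : (1:ℝ) ≤ (N : ℝ) := by exact_mod_cast (by omega : 1 ≤ N)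
  have hd1 : 1 ≤ d := by
    rw [hd]
    exact Nat.one_le_ceil_iff.mpr (Real.rpow_pos_of_pos hx0 α)
  -- upper bound on the number of monomials of the sum
  have hub : (razPoly F N).support.card ≤ m * (s * t) ^ d := by
    rw [hsum]
    calc (∑ i : Fin m, mprodVal (hsw i) (M i)).support.card
        ≤ ∑ i : Fin m, (mprodVal (hsw i) (M i)).support.card :=
          RYAux.supp_card_sum _ _
      _ ≤ ∑ _i : Fin m, (s * t) ^ d := by
          refine Finset.sum_le_sum fun i _ => ?_
          have hent : ∀ A ∈ List.ofFn (M i), ∀ i' j',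
              (A i' j').support.card ≤ t := by
            intro A hA i' j'
            obtain ⟨ℓ, rfl⟩ := List.mem_ofFn.mp hA
            exact (hro i ℓ i' j').2.2
          have h1 := RYAux.prod_entry_supp (List.ofFn (M i)) hent
            ⟨0, hsw i⟩ ⟨0, hsw i⟩
          rw [List.length_ofFn] at h1
          refine le_trans h1 ?_
          exact Nat.pow_le_pow_left (Nat.mul_le_mul_right t (hsws i)) d
      _ = m * (s * t) ^ d := by
          simp [Finset.sum_const, Finset.card_univ]
  have hlow : 2 ^ (N / 2) ≤ (razPoly F N).support.card :=
    RYAux.razPoly_supp F N hN2 hev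
  have hnat : 2 ^ (N / 2) ≤ m * (s * t) ^ d := le_trans hlow hub
  have hst1 : 1 ≤ s * t := by
    by_contra hcon
    have h0 : s * t = 0 := by omega
    rw [h0, zero_pow (by omega : d ≠ 0), Nat.mul_zero] at hnat
    have := Nat.one_le_two_pow (n := N / 2)
    omega
  -- pass to the reals
  have hreal : (2:ℝ) ^ (N / 2) ≤ (m : ℝ) * ((s : ℝ) * (t : ℝ)) ^ d := by
    exact_mod_cast hnat
  set E : ℝ := (N : ℝ) ^ ((9:ℝ)/40) / Real.logb 2 (N : ℝ) with hE
  set L : ℝ := Real.logb 2 (N : ℝ) with hL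
  have hEpos : (0:ℝ) ≤ (2:ℝ) ^ E := (Real.rpow_pos_of_pos (by norm_num) E).le
  have hXle : ((s : ℝ) * (t : ℝ)) ^ d ≤ ((2:ℝ) ^ E * (N : ℝ) ^ c₀) ^ d := by
    refine pow_le_pow_left₀ (by positivity) ?_ d
    exact mul_le_mul hs.le hts (by positivity) hEpos
  have hDle : (d : ℝ) ≤ (N : ℝ) ^ ((1:ℝ)/2) + 1 := by
    rw [hd]
    have h1 : ((⌈(N : ℝ) ^ α⌉₊ : ℕ) : ℝ) < (N : ℝ) ^ α + 1 :=
      Nat.ceil_lt_add_one (Real.rpow_nonneg hx0.le α)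
    have h2 : (N : ℝ) ^ α ≤ (N : ℝ) ^ ((1:ℝ)/2) :=
      Real.rpow_le_rpow_of_exponent_le hx1 hα2
    linarith
  have hexp : (N : ℝ) ^ ((1:ℝ)/11) + E * d + L * (c₀ * d) ≤ (N : ℝ) / 2 :=
    hN₀ N hNN (d : ℝ) (by positivity) hDle
  have hhalf : ((N / 2 : ℕ) : ℝ) = (N : ℝ) / 2 := by
    have h2 : N / 2 * 2 = N := Nat.div_mul_cancel hev.two_dvd
    have h3 : ((N / 2 : ℕ) : ℝ) * 2 = (N : ℝ) := by exact_mod_cast congrArg Nat.cast h2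
    linarith
  have hkey : (2:ℝ) ^ ((N : ℝ) ^ ((1:ℝ)/11)) * ((2:ℝ) ^ E * (N : ℝ) ^ c₀) ^ d
      ≤ (2:ℝ) ^ (N / 2) := by
    have e1 : ((2:ℝ) ^ E) ^ d = (2:ℝ) ^ (E * d) := by
      rw [← Real.rpow_natCast ((2:ℝ) ^ E) d, ← Real.rpow_mul (by norm_num : (0:ℝ) ≤ 2)]
    have eN : (2:ℝ) ^ L = (N : ℝ) :=
      Real.rpow_logb (by norm_num) (by norm_num) hx0
    have e2 : ((N : ℝ) ^ c₀) ^ d = (2:ℝ) ^ (L * (c₀ * d)) := by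
      rw [← eN, ← Real.rpow_natCast (((2:ℝ) ^ L) ^ c₀) d,
        ← Real.rpow_mul (Real.rpow_nonneg (by norm_num : (0:ℝ) ≤ 2) L),
        ← Real.rpow_mul (by norm_num : (0:ℝ) ≤ 2)]
    have e3 : (2:ℝ) ^ ((N : ℝ) ^ ((1:ℝ)/11)) * ((2:ℝ) ^ E * (N : ℝ) ^ c₀) ^ d
        = (2:ℝ) ^ ((N : ℝ) ^ ((1:ℝ)/11) + E * d + L * (c₀ * d)) := by
      rw [mul_pow, e1, e2, Real.rpow_add (by norm_num : (0:ℝ) < 2),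
        Real.rpow_add (by norm_num : (0:ℝ) < 2)]
      ring
    have e4 : (2:ℝ) ^ (N / 2 : ℕ) = (2:ℝ) ^ ((N : ℝ) / 2) := by
      rw [← hhalf, Real.rpow_natCast]
    rw [e3, e4]
    exact Real.rpow_le_rpow_of_exponent_le (by norm_num) hexp
  have hXpos : (0:ℝ) < ((s : ℝ) * (t : ℝ)) ^ d := by
    have : (1:ℝ) ≤ (s : ℝ) * (t : ℝ) := by exact_mod_cast hst1
    positivity
  have hchain : (2:ℝ) ^ ((N : ℝ) ^ ((1:ℝ)/11)) * ((s : ℝ) * (t : ℝ)) ^ d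
      ≤ (m : ℝ) * ((s : ℝ) * (t : ℝ)) ^ d := by
    calc (2:ℝ) ^ ((N : ℝ) ^ ((1:ℝ)/11)) * ((s : ℝ) * (t : ℝ)) ^ d
        ≤ (2:ℝ) ^ ((N : ℝ) ^ ((1:ℝ)/11)) * ((2:ℝ) ^ E * (N : ℝ) ^ c₀) ^ d := by
          exact mul_le_mul_of_nonneg_left hXle (by positivity)
      _ ≤ (2:ℝ) ^ (N / 2) := hkey
      _ ≤ (m : ℝ) * ((s : ℝ) * (t : ℝ)) ^ d := hreal
  exact le_of_mul_le_mul_right hchain hXpos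

end
end

section
/- Let K be a field and let f, g ∈ K[Y ∪ Z] be multilinear polynomials such that no variable occurs in both f and g (the sets of variables appearing in f and in g are disjoint). Then rank(M_{f·g}) = rank(M_f) · rank(M_g). -/
open MvPolynomial

noncomputable section

section PdmAux

open Matrix Module TensorProduct
open scoped Kronecker

variable {K : Type*} [Field K]

lemma finrank_range_tmap {V W V' W' : Type*} [AddCommGroup V] [Module K V]
    [AddCommGroup W] [Module K W] [AddCommGroup V'] [Module K V']
    [AddCommGroup W'] [Module K W'] [FiniteDimensional K V] [FiniteDimensional K W]
    (f : V →ₗ[K] V') (g : W →ₗ[K] W') :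
    Module.finrank K (LinearMap.range (TensorProduct.map f g)) =
      Module.finrank K (LinearMap.range f) * Module.finrank K (LinearMap.range g) := by
  have h1 : TensorProduct.map f g =
      (TensorProduct.mapIncl (LinearMap.range f) (LinearMap.range g)).comp
        (TensorProduct.map f.rangeRestrict g.rangeRestrict) := by
    rw [mapIncl, ← TensorProduct.map_comp]
    congr 1 <;> ext x <;> rfl
  have hsurj : Function.Surjective (TensorProduct.map f.rangeRestrict g.rangeRestrict) :=
    TensorProduct.map_surjective f.surjective_rangeRestrict g.surjective_rangeRestrict
  have h2 : LinearMap.range (TensorProduct.map f g) =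
      LinearMap.range (TensorProduct.mapIncl (LinearMap.range f) (LinearMap.range g)) := by
    rw [h1, LinearMap.range_comp, LinearMap.range_eq_top.mpr hsurj, Submodule.map_top]
  have hinj : Function.Injective
      (TensorProduct.mapIncl (LinearMap.range f) (LinearMap.range g)) := by
    rw [mapIncl, ← LinearMap.rTensor_comp_lTensor]
    exact (Module.Flat.rTensor_preserves_injective_linearMap _
        (Submodule.injective_subtype _)).comp
      (Module.Flat.lTensor_preserves_injective_linearMap _ (Submodule.injective_subtype _))
  rw [h2, ← (LinearEquiv.ofInjective _ hinj).finrank_eq]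
  exact Module.finrank_tensorProduct

lemma Matrix.rank_kronecker' {m n p q : Type*} [Fintype m] [Fintype n] [Fintype p] [Fintype q]
    [DecidableEq n] [DecidableEq q] (A : Matrix m n K) (B : Matrix p q K) :
    (A ⊗ₖ B).rank = A.rank * B.rank := by
  rw [(A ⊗ₖ B).rank_eq_finrank_range_toLin
      ((Pi.basisFun K m).tensorProduct (Pi.basisFun K p))
      ((Pi.basisFun K n).tensorProduct (Pi.basisFun K q)),
    Matrix.toLin_kronecker, finrank_range_tmap,
    A.rank_eq_finrank_range_toLin (Pi.basisFun K m) (Pi.basisFun K n),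
    B.rank_eq_finrank_range_toLin (Pi.basisFun K p) (Pi.basisFun K q)]

lemma onehot_mul {α β γ : Type*} [Fintype β] [DecidableEq β] [Fintype γ]
    (P : α → Prop) [DecidablePred P] (r : α → β) (M : Matrix β γ K) :
    (Matrix.of fun a b => if P a ∧ b = r a then (1 : K) else 0) * M =
      Matrix.of fun a c => if P a then M (r a) c else 0 := by
  ext a c
  by_cases hP : P a <;>
    simp [Matrix.mul_apply, hP, ite_and, Finset.sum_ite_eq']

lemma mul_onehot {α β γ : Type*} [Fintype β] [DecidableEq β]
    (Q : γ → Prop) [DecidablePred Q] (s : γ → β) (M : Matrix α β K) :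
    M * (Matrix.of fun b c => if Q c ∧ b = s c then (1 : K) else 0) =
      Matrix.of fun a c => if Q c then M a (s c) else 0 := by
  ext a c
  by_cases hQ : Q c <;>
    simp [Matrix.mul_apply, hQ, ite_and, Finset.sum_ite_eq']

lemma rank_mul_mul_le {α β γ δ : Type*} [Fintype β] [Fintype δ] [Fintype γ]
    (E : Matrix α β K) (M : Matrix β δ K) (F : Matrix δ γ K) :
    (E * M * F).rank ≤ M.rank :=
  calc (E * M * F).rank ≤ (E * M).rank := Matrix.rank_mul_le_left _ _
    _ ≤ M.rank := Matrix.rank_mul_le_right _ _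

lemma rank_submatrix_le'' {α β γ δ : Type*} [Fintype α] [Fintype β] [Fintype γ] [Fintype δ]
    [DecidableEq β] [DecidableEq δ]
    (r : α → β) (c : γ → δ) (M : Matrix β δ K) : (M.submatrix r c).rank ≤ M.rank := by
  classical
  have hE : M.submatrix r c =
      (Matrix.of fun a b => if (fun _ : α => True) a ∧ b = r a then (1 : K) else 0) * M *
        (Matrix.of fun b cc => if (fun _ : γ => True) cc ∧ b = c cc then (1 : K) else 0) := by
    rw [onehot_mul, mul_onehot]
    ext a cc
    simp
  rw [hE]
  exact rank_mul_mul_le _ _ _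

lemma union_inter_of {γ : Type*} [DecidableEq γ] [Fintype γ] {S1 S2 U : Finset γ}
    (h1 : S1 ⊆ U) (h2 : S2 ⊆ Uᶜ) : (S1 ∪ S2) ∩ U = S1 := by
  ext x
  constructor
  · intro hx
    rw [Finset.mem_inter, Finset.mem_union] at hx
    rcases hx with ⟨h | h, hU⟩
    · exact h
    · exact absurd hU (Finset.mem_compl.mp (h2 h))
  · intro hx
    exact Finset.mem_inter.mpr ⟨Finset.mem_union_left _ hx, h1 hx⟩

lemma union_sdiff_of {γ : Type*} [DecidableEq γ] [Fintype γ] {S1 S2 U : Finset γ}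
    (h1 : S1 ⊆ U) (h2 : S2 ⊆ Uᶜ) : (S1 ∪ S2) \ U = S2 := by
  ext x
  rw [Finset.mem_sdiff, Finset.mem_union]
  constructor
  · rintro ⟨h | h, hU⟩
    · exact absurd (h1 h) hU
    · exact h
  · intro hx
    exact ⟨Or.inr hx, Finset.mem_compl.mp (h2 hx)⟩

/-- The exponent vector of the monomial `y_S z_T`. -/
def mS {h : ℕ} (S T : Finset (Fin h)) : (Fin h ⊕ Fin h) →₀ ℕ :=
  (∑ i ∈ S, Finsupp.single (Sum.inl i) 1) + ∑ j ∈ T, Finsupp.single (Sum.inr j) 1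

lemma pdm_eq {h : ℕ} {K : Type*} [CommSemiring K] (f : MvPolynomial (Fin h ⊕ Fin h) K)
    (S T : Finset (Fin h)) : pdm f S T = f.coeff (mS S T) := rfl

lemma mS_inl {h : ℕ} (S T : Finset (Fin h)) (i : Fin h) :
    mS S T (Sum.inl i) = if i ∈ S then 1 else 0 := by
  classical
  simp [mS, Finsupp.finset_sum_apply, Finsupp.single_apply, Finset.sum_ite_eq']

lemma mS_inr {h : ℕ} (S T : Finset (Fin h)) (j : Fin h) :
    mS S T (Sum.inr j) = if j ∈ T then 1 else 0 := by
  classical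
  simp [mS, Finsupp.finset_sum_apply, Finsupp.single_apply, Finset.sum_ite_eq']

lemma mS_split {h : ℕ} (S T U V : Finset (Fin h)) :
    mS S T = mS (S ∩ U) (T ∩ V) + mS (S \ U) (T \ V) := by
  classical
  ext x
  rcases x with i | j <;>
    simp only [Finsupp.add_apply, mS_inl, mS_inr, Finset.mem_inter, Finset.mem_sdiff]
  · by_cases h1 : i ∈ S <;> by_cases h2 : i ∈ U <;> simp [h1, h2]
  · by_cases h1 : j ∈ T <;> by_cases h2 : j ∈ V <;> simp [h1, h2]

lemma vars_of_mS_coeff {h : ℕ} {K : Type*} [CommSemiring K]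
    (f : MvPolynomial (Fin h ⊕ Fin h) K) {S T : Finset (Fin h)}
    (hne : f.coeff (mS S T) ≠ 0) :
    (∀ i ∈ S, Sum.inl i ∈ f.vars) ∧ ∀ j ∈ T, Sum.inr j ∈ f.vars := by
  classical
  have hs : mS S T ∈ f.support := MvPolynomial.mem_support_iff.mpr hne
  constructor
  · intro i hi
    exact MvPolynomial.mem_vars _ |>.mpr ⟨mS S T, hs, Finsupp.mem_support_iff.mpr (by
      rw [mS_inl]; simp [hi])⟩
  · intro j hj
    exact MvPolynomial.mem_vars _ |>.mpr ⟨mS S T, hs, Finsupp.mem_support_iff.mpr (by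
      rw [mS_inr]; simp [hj])⟩

lemma coeff_mul_split {σ K : Type*} [CommSemiring K] (f g : MvPolynomial σ K) (A : Set σ)
    (hf : ∀ x ∈ f.vars, x ∈ A) (hg : ∀ x ∈ g.vars, x ∉ A)
    (d1 d2 : σ →₀ ℕ) (h1 : ∀ x, x ∉ A → d1 x = 0) (h2 : ∀ x ∈ A, d2 x = 0) :
    MvPolynomial.coeff (d1 + d2) (f * g) =
      MvPolynomial.coeff d1 f * MvPolynomial.coeff d2 g := by
  classical
  rw [MvPolynomial.coeff_mul]
  apply Finset.sum_eq_single_of_mem (d1, d2)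
  · rw [Finset.HasAntidiagonal.mem_antidiagonal]
  · rintro ⟨e1, e2⟩ hmem hne
    rw [Finset.HasAntidiagonal.mem_antidiagonal] at hmem
    by_contra hz
    have hc1 : MvPolynomial.coeff e1 f ≠ 0 := left_ne_zero_of_mul hz
    have hc2 : MvPolynomial.coeff e2 g ≠ 0 := right_ne_zero_of_mul hz
    have he1 : ∀ x, x ∉ A → e1 x = 0 := by
      intro x hx
      by_contra h0
      exact hx (hf x (MvPolynomial.mem_vars _ |>.mpr
        ⟨e1, MvPolynomial.mem_support_iff.mpr hc1, Finsupp.mem_support_iff.mpr h0⟩))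
    have he2 : ∀ x ∈ A, e2 x = 0 := by
      intro x hx
      by_contra h0
      exact hg x (MvPolynomial.mem_vars _ |>.mpr
        ⟨e2, MvPolynomial.mem_support_iff.mpr hc2, Finsupp.mem_support_iff.mpr h0⟩) hx
    apply hne
    have hpt : ∀ x, e1 x + e2 x = d1 x + d2 x := by
      intro x
      have := DFunLike.congr_fun hmem x
      simpa [Finsupp.add_apply] using this
    have key1 : e1 = d1 := by
      ext x
      by_cases hx : x ∈ A
      · have := hpt x; rw [he2 x hx, h2 x hx] at this; omega
      · rw [he1 x hx, h1 x hx]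
    have key2 : e2 = d2 := by
      ext x
      by_cases hx : x ∈ A
      · have := hpt x; rw [he2 x hx, h2 x hx]
      · have := hpt x; rw [he1 x hx, h1 x hx] at this; omega
    exact Prod.ext key1 key2

end PdmAux

/-- Multiplicativity of the rank of the partial derivative matrix for
variable-disjoint multilinear polynomials. -/

theorem pdm_rank_mul {K : Type} [Field K] {h : ℕ}
    (f g : MvPolynomial (Fin h ⊕ Fin h) K) (hf : MLin f) (hg : MLin g)
    (hdisj : Disjoint f.vars g.vars) :
    (pdm (f * g)).rank = (pdm f).rank * (pdm g).rank := by
  classical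
  set U : Finset (Fin h) := Finset.univ.filter (fun i => Sum.inl i ∈ f.vars) with hUdef
  set V : Finset (Fin h) := Finset.univ.filter (fun j => Sum.inr j ∈ f.vars) with hVdef
  have hUm : ∀ i : Fin h, i ∈ U ↔ Sum.inl i ∈ f.vars := fun i => by simp [hUdef]
  have hVm : ∀ j : Fin h, j ∈ V ↔ Sum.inr j ∈ f.vars := fun j => by simp [hVdef]
  set Aset : Set (Fin h ⊕ Fin h) :=
    Sum.elim (fun i => i ∈ U) (fun j => j ∈ V) with hAdef
  have hmemA_inl : ∀ i : Fin h, Sum.inl i ∈ Aset ↔ i ∈ U := fun i => Iff.rfl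
  have hmemA_inr : ∀ j : Fin h, Sum.inr j ∈ Aset ↔ j ∈ V := fun j => Iff.rfl
  have hfA : ∀ x ∈ f.vars, x ∈ Aset := by
    rintro (i | j) hx
    · exact (hmemA_inl i).mpr ((hUm i).mpr hx)
    · exact (hmemA_inr j).mpr ((hVm j).mpr hx)
  have hgA : ∀ x ∈ g.vars, x ∉ Aset := by
    rintro (i | j) hx hmem
    · exact Finset.disjoint_left.mp hdisj ((hUm i).mp ((hmemA_inl i).mp hmem)) hx
    · exact Finset.disjoint_left.mp hdisj ((hVm j).mp ((hmemA_inr j).mp hmem)) hx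
  have hA0 : ∀ S T, ¬(S ⊆ U ∧ T ⊆ V) → pdm f S T = 0 := by
    intro S T hc
    by_contra hne
    rw [pdm_eq] at hne
    obtain ⟨h1, h2⟩ := vars_of_mS_coeff f hne
    exact hc ⟨fun i hi => (hUm i).mpr (h1 i hi), fun j hj => (hVm j).mpr (h2 j hj)⟩
  have hB0 : ∀ S T, ¬(S ⊆ Uᶜ ∧ T ⊆ Vᶜ) → pdm g S T = 0 := by
    intro S T hc
    by_contra hne
    rw [pdm_eq] at hne
    obtain ⟨h1, h2⟩ := vars_of_mS_coeff g hne
    refine hc ⟨fun i hi => Finset.mem_compl.mpr fun hiU => ?_,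
      fun j hj => Finset.mem_compl.mpr fun hjV => ?_⟩
    · exact Finset.disjoint_left.mp hdisj ((hUm i).mp hiU) (h1 i hi)
    · exact Finset.disjoint_left.mp hdisj ((hVm j).mp hjV) (h2 j hj)
  have hC : ∀ S T, pdm (f * g) S T = pdm f (S ∩ U) (T ∩ V) * pdm g (S \ U) (T \ V) := by
    intro S T
    rw [pdm_eq, pdm_eq, pdm_eq, mS_split S T U V]
    apply coeff_mul_split f g Aset hfA hgA
    · rintro (i | j) hx
      · rw [mS_inl]
        have : i ∉ U := fun hi => hx ((hmemA_inl i).mpr hi)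
        simp [Finset.mem_inter, this]
      · rw [mS_inr]
        have : j ∉ V := fun hj => hx ((hmemA_inr j).mpr hj)
        simp [Finset.mem_inter, this]
    · rintro (i | j) hx
      · rw [mS_inl]
        have : i ∈ U := (hmemA_inl i).mp hx
        simp [Finset.mem_sdiff, this]
      · rw [mS_inr]
        have : j ∈ V := (hmemA_inr j).mp hx
        simp [Finset.mem_sdiff, this]
  have hsub : pdm (f * g) =
      (Matrix.kroneckerMap (· * ·) (pdm f) (pdm g)).submatrix
        (fun S => (S ∩ U, S \ U)) (fun T => (T ∩ V, T \ V)) := by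
    ext S T
    exact hC S T
  have hk : Matrix.kroneckerMap (· * ·) (pdm f) (pdm g) =
      (Matrix.of fun (p : Finset (Fin h) × Finset (Fin h)) (S : Finset (Fin h)) =>
        if (p.1 ⊆ U ∧ p.2 ⊆ Uᶜ) ∧ S = p.1 ∪ p.2 then (1 : K) else 0) * pdm (f * g) *
      (Matrix.of fun (T : Finset (Fin h)) (q : Finset (Fin h) × Finset (Fin h)) =>
        if (q.1 ⊆ V ∧ q.2 ⊆ Vᶜ) ∧ T = q.1 ∪ q.2 then (1 : K) else 0) := by
    rw [onehot_mul (P := fun p : Finset (Fin h) × Finset (Fin h) => p.1 ⊆ U ∧ p.2 ⊆ Uᶜ)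
        (r := fun p => p.1 ∪ p.2),
      mul_onehot (Q := fun q : Finset (Fin h) × Finset (Fin h) => q.1 ⊆ V ∧ q.2 ⊆ Vᶜ)
        (s := fun q => q.1 ∪ q.2)]
    ext p q
    obtain ⟨S1, S2⟩ := p
    obtain ⟨T1, T2⟩ := q
    simp only [Matrix.of_apply, Matrix.kroneckerMap_apply]
    by_cases hp : S1 ⊆ U ∧ S2 ⊆ Uᶜ
    · by_cases hq : T1 ⊆ V ∧ T2 ⊆ Vᶜ
      · rw [if_pos hq, if_pos hp, hC,
          union_inter_of hp.1 hp.2, union_sdiff_of hp.1 hp.2,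
          union_inter_of hq.1 hq.2, union_sdiff_of hq.1 hq.2]
      · rw [if_neg hq]
        rcases not_and_or.mp hq with h | h
        · rw [hA0 S1 T1 (fun hc => h hc.2), zero_mul]
        · rw [hB0 S2 T2 (fun hc => h hc.2), mul_zero]
    · rcases not_and_or.mp hp with h | h
      · rw [hA0 S1 T1 (fun hc => h hc.1), zero_mul]
        simp [hp]
      · rw [hB0 S2 T2 (fun hc => h hc.1), mul_zero]
        simp [hp]
  have h1 : (pdm (f * g)).rank ≤ (Matrix.kroneckerMap (· * ·) (pdm f) (pdm g)).rank := by
    rw [hsub]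
    exact rank_submatrix_le'' _ _ _
  have h2 : (Matrix.kroneckerMap (· * ·) (pdm f) (pdm g)).rank ≤ (pdm (f * g)).rank := by
    rw [hk]
    exact rank_mul_mul_le _ _ _
  have hkr := Matrix.rank_kronecker' (pdm f) (pdm g)
  rw [← hkr]
  exact le_antisymm h1 h2

end
end

section
/- There is a constant C > 0 such that for all positive integers S, M_1, M_2 with 1 ≤ M_1 ≤ 2S/3 and S/4 ≤ M_2 ≤ 3S/4 the following holds: if A ⊆ [S] is a fixed set with |A| = M_1 and T is a uniformly random subset of [S] of size M_2, then for every integer a with 0 ≤ a ≤ M_1, Pr[|T ∩ A| = a] ≤ C·M_1^{−1/2}. Equivalently, binom(M_1, a)·binom(S − M_1, M_2 − a) / binom(S, M_2) ≤ C·M_1^{−1/2} for every 0 ≤ a ≤ M_1. -/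
open MvPolynomial

noncomputable section

private lemma key_id (M₁ n M₂ b : ℕ) (hb : b < M₂) :
    M₁.choose b * n.choose (M₂ - b) * ((M₁ - b) * (M₂ - b)) =
      M₁.choose (b+1) * n.choose (M₂ - b - 1) * ((b+1) * (n - (M₂ - b - 1))) := by
  obtain ⟨j, hj⟩ : ∃ j, M₂ - b = j + 1 := ⟨M₂ - b - 1, by omega⟩
  have h1 := Nat.choose_succ_right_eq M₁ b
  have h2 := Nat.choose_succ_right_eq n j
  rw [hj]
  simp only [Nat.add_sub_cancel]
  calc M₁.choose b * n.choose (j+1) * ((M₁ - b) * (j + 1))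
      = (M₁.choose b * (M₁ - b)) * (n.choose (j+1) * (j+1)) := by ring
    _ = (M₁.choose (b+1) * (b+1)) * (n.choose j * (n - j)) := by rw [h1, h2]
    _ = M₁.choose (b+1) * n.choose j * ((b+1) * (n - j)) := by ring

set_option maxHeartbeats 1600000 in
private lemma core (S M₁ M₂ a : ℕ) (hM₁ : 10000 ≤ M₁) (h1 : 3*M₁ ≤ 2*S)
    (h2 : S ≤ 4*M₂) (h3 : 4*M₂ ≤ 3*S) (haM : a ≤ M₂) (haS : M₁ + M₂ ≤ S + a) :
    (M₁.choose a * (S - M₁).choose (M₂ - a) : ℝ) * Real.sqrt M₁ ≤ 22 * (S.choose M₂) := by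
  set n := S - M₁ with hn
  set u : ℕ → ℕ := fun b => M₁.choose b * n.choose (M₂ - b) with hu
  have hM₁S : M₁ < S := by omega
  have hM₂S : M₂ ≤ S := by omega
  -- Vandermonde
  have hsum : ∑ b ∈ Finset.range (M₂+1), u b = S.choose M₂ := by
    have h := Nat.add_choose_eq M₁ n M₂
    rw [Finset.Nat.sum_antidiagonal_eq_sum_range_succ_mk, show M₁ + n = S by omega] at h
    exact h.symm
  set D : Finset ℕ := (Finset.range (M₂+1)).filter (fun b => M₁ + M₂ ≤ S + b) with hD
  have hmemD : ∀ b, b ∈ D ↔ b ≤ M₂ ∧ M₁ + M₂ ≤ S + b := by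
    intro b; simp [hD, Finset.mem_filter, Finset.mem_range, Nat.lt_succ_iff]
  have hsumD : ∑ b ∈ D, u b = S.choose M₂ := by
    rw [← hsum]
    apply Finset.sum_subset (Finset.filter_subset _ _)
    intro b hb hbD
    simp only [hD, Finset.mem_filter, Finset.mem_range] at hbD hb
    have : n < M₂ - b := by omega
    simp [hu, Nat.choose_eq_zero_of_lt this]
  have haD : a ∈ D := (hmemD a).2 ⟨haM, haS⟩
  obtain ⟨x, hxD, hxmax⟩ := Finset.exists_max_image D u ⟨a, haD⟩
  obtain ⟨hxM₂, hxW⟩ := (hmemD x).1 hxD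
  have hchoosepos : 0 < S.choose M₂ := Nat.choose_pos hM₂S
  have hux : 0 < u x := by
    rcases Nat.eq_zero_or_pos (u x) with h | h
    swap
    · exact h
    · exfalso
      have : ∑ b ∈ D, u b = 0 := Finset.sum_eq_zero fun b hb => Nat.le_zero.1 (h ▸ hxmax b hb)
      omega
  have hxM₁ : x ≤ M₁ := by
    by_contra h
    rw [hu] at hux; simp [Nat.choose_eq_zero_of_lt (by omega : M₁ < x)] at hux
  have hSbig : 15000 ≤ S := by omega
  -- x is not at the top boundary
  have hxltM₂ : x < M₂ := by
    rcases Nat.lt_or_ge x M₂ with h | h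
    · exact h
    exfalso
    have hx : x = M₂ := le_antisymm hxM₂ h
    have hux' : 0 < u M₂ := hx ▸ hux
    have hxmax' : ∀ b ∈ D, u b ≤ u M₂ := fun b hb => hx ▸ hxmax b hb
    have hmem : M₂ - 1 ∈ D := (hmemD _).2 ⟨by omega, by omega⟩
    have hid := key_id M₁ n M₂ (M₂ - 1) (by omega)
    rw [show M₂ - 1 + 1 = M₂ by omega, show M₂ - (M₂-1) = 1 by omega] at hid
    simp only [Nat.sub_self] at hid
    -- hid : u (M₂-1) * ((M₁ - (M₂-1)) * 1) = u M₂ * (M₂ * (n - 0))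
    have hle : u M₂ * (M₂ * n) ≤ u M₂ * (M₁ + 1) := by
      calc u M₂ * (M₂ * n) = u (M₂-1) * ((M₁ - (M₂-1)) * 1) := by
            have h' := hid.symm
            simp only [Nat.sub_zero] at h'
            simp only [hu, show M₂ - (M₂-1) = 1 from by omega, Nat.sub_self]
            exact h'
        _ ≤ u M₂ * (M₁ + 1) :=
            Nat.mul_le_mul (hxmax' _ hmem) (by omega)
    have h2' : M₂ * n ≤ M₁ + 1 := Nat.le_of_mul_le_mul_left (by linarith [hle]) hux'
    have h5 : M₂ * 5000 ≤ M₂ * n := Nat.mul_le_mul_left M₂ (by omega)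
    nlinarith [h2', h5]
  -- inequality (A)
  have hA : (M₁ - x) * (M₂ - x) ≤ (x+1) * (S + x + 1 - (M₁ + M₂)) := by
    have hmem : x + 1 ∈ D := (hmemD _).2 ⟨by omega, by omega⟩
    have hid := key_id M₁ n M₂ x hxltM₂
    rw [show n - (M₂ - x - 1) = S + x + 1 - (M₁ + M₂) by omega] at hid
    have hle : u x * ((M₁ - x) * (M₂ - x)) ≤ u x * ((x+1) * (S + x + 1 - (M₁ + M₂))) := by
      rw [hid]
      exact Nat.mul_le_mul_right _ (hxmax _ hmem)
    exact Nat.le_of_mul_le_mul_left hle hux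
  have realA : ((M₁:ℝ) - x) * ((M₂:ℝ) - x) ≤ ((x:ℝ)+1) * ((S:ℝ) + x + 1 - (M₁ + M₂)) := by
    have := (Nat.cast_le (α := ℝ)).2 hA
    push_cast [Nat.cast_sub hxM₁, Nat.cast_sub hxltM₂.le,
      Nat.cast_sub (show M₁ + M₂ ≤ S + x + 1 by omega)] at this
    convert this using 2 <;> push_cast <;> ring
  -- real basic facts
  have r1 : 3*(M₁:ℝ) ≤ 2*(S:ℝ) := by exact_mod_cast h1
  have r2 : (S:ℝ) ≤ 4*(M₂:ℝ) := by exact_mod_cast h2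
  have r3 : 4*(M₂:ℝ) ≤ 3*(S:ℝ) := by exact_mod_cast h3
  have rM₁ : (10000:ℝ) ≤ (M₁:ℝ) := by exact_mod_cast hM₁
  have rS : (15000:ℝ) ≤ (S:ℝ) := by exact_mod_cast hSbig
  have rx0 : (0:ℝ) ≤ (x:ℝ) := Nat.cast_nonneg x
  have hlinA : (M₁:ℝ)*(M₂:ℝ) ≤ (x:ℝ)*((S:ℝ)+2) + (S:ℝ) + 1 := by nlinarith [realA]
  have hS2 : (0:ℝ) < (S:ℝ)+2 := by linarith
  have hp1 : (0:ℝ) ≤ (M₁:ℝ)*(4*(M₂:ℝ) - S) := mul_nonneg (Nat.cast_nonneg _) (by linarith)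
  have hp2 : (0:ℝ) ≤ ((M₁:ℝ) - 10000)*(S:ℝ) := mul_nonneg (by linarith) (Nat.cast_nonneg _)
  have hXlow : (M₁:ℝ) ≤ 9*(x:ℝ) := by
    have e1 : (M₁:ℝ)*(S:ℝ) ≤ (M₁:ℝ)*(4*(M₂:ℝ)) :=
      mul_le_mul_of_nonneg_left r2 (Nat.cast_nonneg _)
    have e2 : (10000:ℝ)*(S:ℝ) ≤ (M₁:ℝ)*(S:ℝ) :=
      mul_le_mul_of_nonneg_right rM₁ (Nat.cast_nonneg _)
    have h' : (M₁:ℝ)*((S:ℝ)+2) ≤ (9*(x:ℝ))*((S:ℝ)+2) := by linarith [hlinA, e1, e2]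
    exact le_of_mul_le_mul_right h' hS2
  have hWlow : (M₁:ℝ) ≤ 9*((S:ℝ) + x - M₁ - M₂) := by
    have hq1 : (0:ℝ) ≤ (3*(S:ℝ)-4*M₂)*(9*((S:ℝ)+2)-9*M₁) :=
      mul_nonneg (by linarith) (by push_cast; nlinarith [hM₁S])
    have hq2 : (0:ℝ) ≤ (2*(S:ℝ)-3*M₁)*(S:ℝ) := mul_nonneg (by linarith) (Nat.cast_nonneg _)
    have hq3 : (0:ℝ) ≤ ((S:ℝ)-15000)*(S:ℝ) := mul_nonneg (by linarith) (Nat.cast_nonneg _)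
    have h' : (M₁:ℝ)*((S:ℝ)+2) ≤ (9*((S:ℝ) + x - M₁ - M₂))*((S:ℝ)+2) := by
      linarith [hlinA, hq1, hq2, hq3, r1, rS]
    exact le_of_mul_le_mul_right h' hS2
  -- x ≥ 1 and x-1 ∈ D
  have hx1 : 1111 ≤ x := by
    have : (1111:ℝ) ≤ (x:ℝ) := by linarith
    exact_mod_cast this
  have hWn : M₁ + M₂ + 1111 ≤ S + x := by
    have : ((M₁ + M₂ + 1111 : ℕ):ℝ) ≤ ((S + x : ℕ):ℝ) := by push_cast; linarith
    exact_mod_cast this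
  -- inequality (B)
  have hB : x * (S + x - (M₁ + M₂)) ≤ (M₁ - x + 1) * (M₂ - x + 1) := by
    have hmem : x - 1 ∈ D := (hmemD _).2 ⟨by omega, by omega⟩
    have hid := key_id M₁ n M₂ (x-1) (by omega)
    rw [show x - 1 + 1 = x by omega, show M₂ - (x-1) = M₂ - x + 1 by omega,
      show M₂ - x + 1 - 1 = M₂ - x by omega, show M₁ - (x-1) = M₁ - x + 1 by omega,
      show n - (M₂ - x) = S + x - (M₁ + M₂) by omega] at hid
    have hle : u x * (x * (S + x - (M₁ + M₂))) ≤ u x * ((M₁ - x + 1) * (M₂ - x + 1)) := by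
      calc u x * (x * (S + x - (M₁ + M₂)))
          = u (x-1) * ((M₁ - x + 1) * (M₂ - x + 1)) := by
            have h' := hid.symm
            simp only [hu] at h' ⊢
            rw [show M₂ - (x-1) = M₂ - x + 1 by omega]
            exact h'
        _ ≤ u x * ((M₁ - x + 1) * (M₂ - x + 1)) :=
            Nat.mul_le_mul_right _ (hxmax _ hmem)
    exact Nat.le_of_mul_le_mul_left hle hux
  have realB : (x:ℝ) * ((S:ℝ) + x - (M₁ + M₂)) ≤ ((M₁:ℝ) - x + 1) * ((M₂:ℝ) - x + 1) := by
    have := (Nat.cast_le (α := ℝ)).2 hB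
    push_cast [Nat.cast_sub hxM₁, Nat.cast_sub hxltM₂.le,
      Nat.cast_sub (show M₁ + M₂ ≤ S + x by omega)] at this
    convert this using 2 <;> push_cast <;> ring
  have hlinB : (x:ℝ)*((S:ℝ)+2) ≤ ((M₁:ℝ)+1)*((M₂:ℝ)+1) := by nlinarith [realB]
  have hM₁xlow : (M₁:ℝ) ≤ 9*((M₁:ℝ) - x) := by
    have h' : (M₁:ℝ)*((S:ℝ)+2) ≤ (9*((M₁:ℝ) - x))*((S:ℝ)+2) := by
      have e1 : (0:ℝ) ≤ ((M₁:ℝ)+1)*(3*(S:ℝ) - 4*M₂) := mul_nonneg (by positivity) (by linarith)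
      have e2 : (0:ℝ) ≤ (2*(S:ℝ) - 3*M₁)*((S:ℝ)+2) := mul_nonneg (by linarith) (by linarith)
      have e3 : (0:ℝ) ≤ ((S:ℝ)-15000)*((S:ℝ)+2) := mul_nonneg (by linarith) (by linarith)
      linarith [hlinB, e1, e2, e3, r1, rS, rM₁]
    exact le_of_mul_le_mul_right h' hS2
  have hM₂xlow : (M₁:ℝ) ≤ 9*((M₂:ℝ) - x) := by
    have h' : (M₁:ℝ)*((S:ℝ)+2) ≤ (9*((M₂:ℝ) - x))*((S:ℝ)+2) := by
      have e1 : (0:ℝ) ≤ (4*(M₂:ℝ) - S)*((S:ℝ) - M₁) := mul_nonneg (by linarith) (by linarith)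
      have e2 : (0:ℝ) ≤ (2*(S:ℝ) - 3*M₁)*((S:ℝ)+2) := mul_nonneg (by linarith) (by linarith)
      have e3 : (0:ℝ) ≤ ((S:ℝ)-15000)*((S:ℝ)+2) := mul_nonneg (by linarith) (by linarith)
      have e4 : (0:ℝ) ≤ (4*(M₂:ℝ) - S)*((S:ℝ)+2) := mul_nonneg (by linarith) (by linarith)
      nlinarith [hlinB, e1, e2, e3, e4, r1, r2, rS, rM₁]
    exact le_of_mul_le_mul_right h' hS2
  -- the window length L
  set L : ℕ := Nat.sqrt M₁ / 11 with hLdef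
  have hs100 : 100 ≤ Nat.sqrt M₁ := Nat.le_sqrt.2 (by omega)
  have h11L : 11 * L ≤ Nat.sqrt M₁ := by
    rw [hLdef, Nat.mul_comm]; exact Nat.div_mul_le_self _ _
  have hsq : Nat.sqrt M₁ * Nat.sqrt M₁ ≤ M₁ := by
    have := Nat.sqrt_le' M₁; rwa [pow_two] at this
  have hLn : 1100 * L ≤ M₁ := by
    calc 1100 * L = 100 * (11 * L) := by ring
      _ ≤ Nat.sqrt M₁ * Nat.sqrt M₁ := Nat.mul_le_mul (by omega) h11L
      _ ≤ M₁ := hsq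
  have hL2 : 121 * (L * L) ≤ M₁ := by
    calc 121 * (L * L) = (11 * L) * (11 * L) := by ring
      _ ≤ Nat.sqrt M₁ * Nat.sqrt M₁ := Nat.mul_le_mul h11L h11L
      _ ≤ M₁ := hsq
  have hL9 : 9 ≤ L := by
    rw [hLdef, Nat.le_div_iff_mul_le (by norm_num)]; omega
  have hLrM : 1100 * (L:ℝ) ≤ (M₁:ℝ) := by exact_mod_cast hLn
  have hL2r : 121 * (L:ℝ)^2 ≤ (M₁:ℝ) := by
    have : ((121 * (L*L) : ℕ):ℝ) ≤ ((M₁:ℕ):ℝ) := by exact_mod_cast hL2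
    push_cast at this; nlinarith [this]
  have hM₁pos : (0:ℝ) < (M₁:ℝ) := by linarith
  have hsqrt : Real.sqrt M₁ ≤ 11*((L:ℝ)+1) := by
    have h1 : (M₁:ℝ) ≤ ((Nat.sqrt M₁ : ℝ) + 1)^2 := by
      have := Nat.lt_succ_sqrt M₁
      have : (M₁:ℝ) < ((Nat.sqrt M₁ + 1 : ℕ):ℝ) * ((Nat.sqrt M₁ + 1 : ℕ):ℝ) := by
        exact_mod_cast this
      push_cast at this; nlinarith [this]
    have h2 : Real.sqrt M₁ ≤ (Nat.sqrt M₁ : ℝ) + 1 := by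
      rw [show (Nat.sqrt M₁ : ℝ) + 1 = Real.sqrt (((Nat.sqrt M₁:ℝ)+1)^2) from
        (Real.sqrt_sq (by positivity)).symm]
      exact Real.sqrt_le_sqrt h1
    have h3 : (Nat.sqrt M₁ : ℝ) + 1 ≤ 11*((L:ℝ)+1) := by
      have : Nat.sqrt M₁ + 1 ≤ 11*(L+1) := by
        have := Nat.div_add_mod (Nat.sqrt M₁) 11
        have : Nat.sqrt M₁ % 11 < 11 := Nat.mod_lt _ (by norm_num)
        omega
      exact_mod_cast this
    linarith
  have hLx : L ≤ x := by
    have : (L:ℝ) ≤ (x:ℝ) := by linarith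
    exact_mod_cast this
  have hWL : M₁ + M₂ + L ≤ S + x := by
    have : ((M₁ + M₂ + L : ℕ):ℝ) ≤ ((S + x : ℕ):ℝ) := by push_cast; linarith
    exact_mod_cast this
  -- helper for the epsilon bounds
  have hfrac : ∀ c : ℝ, (M₁:ℝ) ≤ 18*c → (L:ℝ) ≤ (18*(L:ℝ)/(M₁:ℝ))*c := by
    intro c hc
    rw [div_mul_eq_mul_div, le_div_iff₀ hM₁pos]
    have := mul_le_mul_of_nonneg_left hc (show (0:ℝ) ≤ (L:ℝ) from Nat.cast_nonneg _)
    nlinarith [this]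
  have hε0 : (0:ℝ) ≤ 18*(L:ℝ)/(M₁:ℝ) := by positivity
  obtain ⟨t, ht⟩ : ∃ t : ℝ, t = 1 + 18*(L:ℝ)/(M₁:ℝ) := ⟨_, rfl⟩
  have ht1 : (1:ℝ) ≤ t := by rw [ht]; linarith
  have hfrac' : ∀ c : ℝ, (M₁:ℝ) ≤ 18*c → (L:ℝ) ≤ (t-1)*c := by
    intro c hc
    have := hfrac c hc
    rw [ht]; ring_nf; ring_nf at this; linarith [this]
  -- the one-step bound
  have hstep : ∀ b : ℕ, x ≤ b + L → b < x →
      (u (b+1) : ℝ) ≤ t^4 * (u b : ℝ) := by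
    intro b hbL hbx
    have hbM₂ : b < M₂ := lt_of_lt_of_le hbx hxM₂
    have hbM₁ : b < M₁ := by
      have : (b:ℝ) < (x:ℝ) := by exact_mod_cast hbx
      have : (b:ℝ) < (M₁:ℝ) := by linarith
      exact_mod_cast this
    have hbW : M₁ + M₂ ≤ S + b := by omega
    have hid := key_id M₁ n M₂ b hbM₂
    rw [show n - (M₂ - b - 1) = S + b + 1 - (M₁ + M₂) by omega] at hid
    have rid : (u b : ℝ) * (((M₁:ℝ)-b)*((M₂:ℝ)-b)) =
        (u (b+1) : ℝ) * (((b:ℝ)+1)*((S:ℝ)+b+1-(M₁+M₂))) := by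
      simp only [hu]
      rw [show M₂ - (b+1) = M₂ - b - 1 from by omega]
      have := congrArg (fun t : ℕ => (t:ℝ)) hid
      push_cast [Nat.cast_sub hbM₁.le, Nat.cast_sub hbM₂.le,
        Nat.cast_sub (show M₁ + M₂ ≤ S + b + 1 by omega)] at this ⊢
      linarith [this]
    have hBl : (x:ℝ) - L ≤ (b:ℝ) := by
      have : (x:ℝ) ≤ (b:ℝ) + L := by exact_mod_cast hbL
      linarith
    have hBx : (b:ℝ) + 1 ≤ (x:ℝ) := by exact_mod_cast hbx
    have e1 : (M₁:ℝ)-b ≤ t*((M₁:ℝ)-x) := by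
      have := hfrac' ((M₁:ℝ)-x) (by linarith)
      linarith [this, hBl]
    have e2 : (M₂:ℝ)-b ≤ t*((M₂:ℝ)-x) := by
      have := hfrac' ((M₂:ℝ)-x) (by linarith)
      linarith [this, hBl]
    have e3 : (x:ℝ)+1 ≤ t*((b:ℝ)+1) := by
      have := hfrac' ((b:ℝ)+1) (by linarith)
      linarith [this, hBl]
    have e4 : (S:ℝ)+x+1-(M₁+M₂) ≤ t*((S:ℝ)+b+1-(M₁+M₂)) := by
      have := hfrac' ((S:ℝ)+b+1-(M₁+M₂)) (by linarith)
      linarith [this, hBl]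
    have key : ((M₁:ℝ)-b)*((M₂:ℝ)-b) ≤
        t^4 * (((b:ℝ)+1)*((S:ℝ)+b+1-(M₁+M₂))) := by
      have k1 : ((M₁:ℝ)-b)*((M₂:ℝ)-b) ≤
          (t*((M₁:ℝ)-x)) * (t*((M₂:ℝ)-x)) :=
        mul_le_mul e1 e2 (by linarith) (mul_nonneg (by linarith) (by linarith [hM₁xlow, rM₁]))
      have k2' := mul_le_mul_of_nonneg_left realA
        (show (0:ℝ) ≤ t^2 from sq_nonneg _)
      have k3 : ((x:ℝ)+1)*((S:ℝ)+x+1-(M₁+M₂)) ≤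
          (t*((b:ℝ)+1)) * (t*((S:ℝ)+b+1-(M₁+M₂))) :=
        mul_le_mul e3 e4 (by linarith [hWlow]) (mul_nonneg (by linarith) (by linarith [hBx, rx0]))
      have k3' := mul_le_mul_of_nonneg_left k3
        (show (0:ℝ) ≤ t^2 from sq_nonneg _)
      linarith [k1, k2', k3']
    have hQ : (0:ℝ) < ((b:ℝ)+1)*((S:ℝ)+b+1-(M₁+M₂)) := by
      apply mul_pos (by positivity)
      linarith [hWlow]
    have := mul_le_mul_of_nonneg_left key (show (0:ℝ) ≤ (u b : ℝ) from Nat.cast_nonneg _)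
    rw [rid] at this
    have h2' : (u (b+1) : ℝ) * (((b:ℝ)+1)*((S:ℝ)+b+1-(M₁+M₂))) ≤
        (t^4 * (u b : ℝ)) * (((b:ℝ)+1)*((S:ℝ)+b+1-(M₁+M₂))) := by
      linarith [this]
    exact le_of_mul_le_mul_right h2' hQ
  -- iterate the one-step bound
  have hind : ∀ i, i ≤ L → (u x : ℝ) ≤ t^(4*i) * (u (x-i) : ℝ) := by
    intro i
    induction i with
    | zero => intro _; simp
    | succ k ih =>
      intro hk
      have hih := ih (by omega)
      have hs := hstep (x - (k+1)) (by omega) (by omega)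
      rw [show x - (k+1) + 1 = x - k by omega] at hs
      calc (u x : ℝ) ≤ t^(4*k) * (u (x-k) : ℝ) := hih
        _ ≤ t^(4*k) * (t^4 * (u (x-(k+1)) : ℝ)) :=
            mul_le_mul_of_nonneg_left hs (by positivity)
        _ = t^(4*(k+1)) * (u (x-(k+1)) : ℝ) := by
            rw [show 4*(k+1) = 4*k + 4 by ring, pow_add]; ring
  -- t^(4L) ≤ 2
  have hKL : t^(4*L) ≤ 2 := by
    have h1e : t ≤ Real.exp (18*(L:ℝ)/(M₁:ℝ)) := by
      rw [ht]; linarith [Real.add_one_le_exp (18*(L:ℝ)/(M₁:ℝ))]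
    have h2e : t^(4*L) ≤ Real.exp (18*(L:ℝ)/(M₁:ℝ))^(4*L) :=
      pow_le_pow_left₀ (by rw [ht]; positivity) h1e _
    have h3e : Real.exp (18*(L:ℝ)/(M₁:ℝ))^(4*L) = Real.exp (((4*L:ℕ):ℝ) * (18*(L:ℝ)/(M₁:ℝ))) := by
      rw [Real.exp_nat_mul]
    have h4e : ((4*L:ℕ):ℝ) * (18*(L:ℝ)/(M₁:ℝ)) ≤ 72/121 := by
      push_cast
      rw [mul_div_assoc', div_le_div_iff₀ hM₁pos (by norm_num : (0:ℝ) < 121)]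
      nlinarith [hL2r]
    have h5e : Real.exp (((4*L:ℕ):ℝ) * (18*(L:ℝ)/(M₁:ℝ))) ≤ 2 := by
      rw [show (2:ℝ) = Real.exp (Real.log 2) from (Real.exp_log (by norm_num)).symm]
      apply Real.exp_le_exp.2
      linarith [Real.log_two_gt_d9, h4e]
    linarith [h2e, h3e ▸ h5e]
  -- window sum bound
  have hwin : ((L:ℝ)+1) * (u x : ℝ) ≤ 2 * ∑ i ∈ Finset.range (L+1), (u (x-i) : ℝ) := by
    have heach : ∀ i ∈ Finset.range (L+1), (u x : ℝ) ≤ 2 * (u (x-i) : ℝ) := by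
      intro i hi
      rw [Finset.mem_range] at hi
      have h1' := hind i (by omega)
      have h2' : t^(4*i) ≤ t^(4*L) := pow_le_pow_right₀ ht1 (by omega)
      have h3' : t^(4*i) * (u (x-i) : ℝ) ≤ 2 * (u (x-i) : ℝ) :=
        mul_le_mul_of_nonneg_right (le_trans h2' hKL) (Nat.cast_nonneg _)
      linarith
    calc ((L:ℝ)+1) * (u x : ℝ) = ∑ _i ∈ Finset.range (L+1), (u x : ℝ) := by
          rw [Finset.sum_const, Finset.card_range]; push_cast; ring
      _ ≤ ∑ i ∈ Finset.range (L+1), 2 * (u (x-i) : ℝ) := Finset.sum_le_sum heach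
      _ = 2 * ∑ i ∈ Finset.range (L+1), (u (x-i) : ℝ) := by rw [← Finset.mul_sum]
  -- the window sum is at most the full sum
  have hsubN : ∑ i ∈ Finset.range (L+1), u (x-i) ≤ S.choose M₂ := by
    rw [← hsumD]
    have hinj : ∀ i ∈ Finset.range (L+1), ∀ j ∈ Finset.range (L+1),
        x - i = x - j → i = j := by
      intro i hi j hj hij
      rw [Finset.mem_range] at hi hj
      omega
    rw [← Finset.sum_image hinj]
    apply Finset.sum_le_sum_of_subset
    intro b hb
    rw [Finset.mem_image] at hb
    obtain ⟨i, hi, rfl⟩ := hb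
    rw [Finset.mem_range] at hi
    exact (hmemD _).2 ⟨by omega, by omega⟩
  -- conclusion
  have hcast : (∑ i ∈ Finset.range (L+1), (u (x-i) : ℝ)) ≤ (S.choose M₂ : ℝ) := by
    rw [← Nat.cast_sum]
    exact_mod_cast hsubN
  have hfin : ((L:ℝ)+1) * (u x : ℝ) ≤ 2 * (S.choose M₂ : ℝ) := by linarith
  have hua : (u a : ℝ) ≤ (u x : ℝ) := Nat.cast_le.2 (hxmax a haD)
  have hgoal : (u a : ℝ) * Real.sqrt M₁ ≤ 22 * (S.choose M₂ : ℝ) := by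
    have h1' : (u a : ℝ) * Real.sqrt M₁ ≤ (u x : ℝ) * (11*((L:ℝ)+1)) :=
      mul_le_mul hua hsqrt (Real.sqrt_nonneg _) (Nat.cast_nonneg _)
    calc (u a : ℝ) * Real.sqrt M₁ ≤ (u x : ℝ) * (11*((L:ℝ)+1)) := h1'
      _ = 11*(((L:ℝ)+1) * (u x : ℝ)) := by ring
      _ ≤ 11*(2 * (S.choose M₂ : ℝ)) := mul_le_mul_of_nonneg_left hfin (by norm_num)
      _ = 22 * (S.choose M₂ : ℝ) := by ring
  simp only [hu] at hgoal
  push_cast at hgoal ⊢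
  linarith [hgoal]

/-- Hypergeometric anticoncentration, part 2. -/
theorem hypergeometric_anticoncentration_two :
    ∃ C : ℝ, 0 < C ∧ ∀ (S M₁ M₂ : ℕ), 0 < S → 0 < M₁ → 0 < M₂ →
      (M₁ : ℝ) ≤ 2*(S : ℝ)/3 →
      (S : ℝ)/4 ≤ (M₂ : ℝ) → (M₂ : ℝ) ≤ 3*(S : ℝ)/4 →
      ∀ A : Finset (Fin S), A.card = M₁ → ∀ a : ℕ, a ≤ M₁ →
        unifProb (fun T : {T : Finset (Fin S) // T.card = M₂} =>
            (T.1 ∩ A).card = a) ≤ C * (M₁ : ℝ) ^ (-(1 : ℝ)/2) := by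
  refine ⟨100, by norm_num, ?_⟩
  intro S M₁ M₂ hS hM₁pos hM₂pos h1 h2 h3 A hA a haM₁
  have h1n : 3 * M₁ ≤ 2 * S := by
    have : (3 * M₁ : ℝ) ≤ 2 * S := by push_cast; linarith
    exact_mod_cast this
  have h2n : S ≤ 4 * M₂ := by
    have : (S : ℝ) ≤ 4 * M₂ := by push_cast; linarith
    exact_mod_cast this
  have h3n : 4 * M₂ ≤ 3 * S := by
    have : (4 * M₂ : ℝ) ≤ 3 * S := by push_cast; linarith
    exact_mod_cast this
  have hM₂S : M₂ ≤ S := by omega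
  have hM₁S : M₁ < S := by omega
  have hcardΩ : Fintype.card {T : Finset (Fin S) // T.card = M₂} = S.choose M₂ := by
    rw [Fintype.card_finset_len, Fintype.card_fin]
  have hΩpos : 0 < S.choose M₂ := Nat.choose_pos hM₂S
  have hsqrtpos : 0 < Real.sqrt M₁ := Real.sqrt_pos.2 (by exact_mod_cast hM₁pos)
  have hrpow : (M₁ : ℝ) ^ (-(1:ℝ)/2) = (Real.sqrt M₁)⁻¹ := by
    rw [neg_div, Real.rpow_neg (Nat.cast_nonneg _), Real.sqrt_eq_rpow]
  rw [unifProb, hrpow, hcardΩ, Finset.filter_congr_decidable]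
  set p : {T : Finset (Fin S) // T.card = M₂} → Prop :=
    fun T => (T.1 ∩ A).card = a with hp
  set N : ℕ := (Finset.univ.filter p).card with hN
  by_cases hM₁big : 10000 ≤ M₁
  · -- main case
    rcases Nat.eq_zero_or_pos N with h0 | hNpos
    · rw [h0]
      push_cast
      rw [zero_div]
      positivity
    · -- there is a witness, giving the needed side conditions
      obtain ⟨T, hT⟩ := Finset.card_pos.1 hNpos
      have hTp : p T := (Finset.mem_filter.1 hT).2
      have hTa : (T.1 ∩ A).card = a := hTp
      have haM₂ : a ≤ M₂ := by
        rw [← hTa]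
        calc (T.1 ∩ A).card ≤ T.1.card := Finset.card_le_card Finset.inter_subset_left
          _ = M₂ := T.2
      have hsd : (T.1 \ A).card = M₂ - a := by
        have := Finset.card_inter_add_card_sdiff T.1 A
        rw [hTa, T.2] at this
        omega
      have hcompl : (Aᶜ : Finset (Fin S)).card = S - M₁ := by
        rw [Finset.card_compl, Fintype.card_fin, hA]
      have hsub : T.1 \ A ⊆ Aᶜ := fun y hy =>
        Finset.mem_compl.2 (Finset.mem_sdiff.1 hy).2
      have hs3 : M₂ - a ≤ S - M₁ := by
        rw [← hsd, ← hcompl]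
        exact Finset.card_le_card hsub
      have haS : M₁ + M₂ ≤ S + a := by omega
      -- injection into pairs of subsets
      have hNle : N ≤ M₁.choose a * (S - M₁).choose (M₂ - a) := by
        have hinj : N ≤ ((A.powersetCard a) ×ˢ ((Aᶜ : Finset (Fin S)).powersetCard (M₂ - a))).card := by
          apply Finset.card_le_card_of_injOn
            (fun T => (T.1 ∩ A, T.1 \ A))
          · intro U hU
            have hUp : (U.1 ∩ A).card = a := (Finset.mem_filter.1 hU).2
            have hUsd : (U.1 \ A).card = M₂ - a := by
              have := Finset.card_inter_add_card_sdiff U.1 A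
              rw [hUp, U.2] at this
              omega
            rw [Finset.mem_coe, Finset.mem_product]
            constructor
            · rw [Finset.mem_powersetCard]
              exact ⟨Finset.inter_subset_right, hUp⟩
            · rw [Finset.mem_powersetCard]
              exact ⟨fun y hy => Finset.mem_compl.2 (Finset.mem_sdiff.1 hy).2, hUsd⟩
          · intro U hU V hV hUV
            have h1' : U.1 ∩ A = V.1 ∩ A := congrArg Prod.fst hUV
            have h2' : U.1 \ A = V.1 \ A := congrArg Prod.snd hUV
            apply Subtype.ext
            calc U.1 = U.1 ∩ A ∪ U.1 \ A := (sup_inf_sdiff U.1 A).symm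
              _ = V.1 ∩ A ∪ V.1 \ A := by rw [h1', h2']
              _ = V.1 := sup_inf_sdiff V.1 A
        rw [Finset.card_product, Finset.card_powersetCard, Finset.card_powersetCard,
          hA, hcompl] at hinj
        exact hinj
      have hcore := core S M₁ M₂ a hM₁big h1n h2n h3n haM₂ haS
      -- conclude
      have hNr : (N : ℝ) ≤ (M₁.choose a * (S - M₁).choose (M₂ - a) : ℕ) :=
        Nat.cast_le.2 hNle
      have hfinal : (N : ℝ) * Real.sqrt M₁ ≤ 22 * (S.choose M₂ : ℝ) := by
        calc (N : ℝ) * Real.sqrt M₁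
            ≤ ((M₁.choose a * (S - M₁).choose (M₂ - a) : ℕ) : ℝ) * Real.sqrt M₁ :=
              mul_le_mul_of_nonneg_right hNr (Real.sqrt_nonneg _)
          _ ≤ 22 * (S.choose M₂ : ℝ) := by push_cast; push_cast at hcore; linarith
      rw [div_le_iff₀ (by positivity : (0:ℝ) < (S.choose M₂ : ℝ))]
      calc (N : ℝ) = (N * Real.sqrt M₁) * (Real.sqrt M₁)⁻¹ := by
            field_simp
        _ ≤ (22 * (S.choose M₂ : ℝ)) * (Real.sqrt M₁)⁻¹ :=
            mul_le_mul_of_nonneg_right hfinal (by positivity)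
        _ ≤ (100 * (Real.sqrt M₁)⁻¹) * (S.choose M₂ : ℝ) := by
            have : (0:ℝ) ≤ (S.choose M₂ : ℝ) := Nat.cast_nonneg _
            have h22 : (22:ℝ) ≤ 100 := by norm_num
            have h23 := mul_le_mul_of_nonneg_right h22
              (mul_nonneg (inv_nonneg.2 (Real.sqrt_nonneg (M₁:ℝ))) this)
            linarith [h23]
  · -- small M₁ : the probability is at most 1 and the bound is at least 1
    have hprob1 : ((Finset.univ.filter p).card : ℝ) / (S.choose M₂ : ℝ) ≤ 1 := by
      rw [div_le_one (by positivity : (0:ℝ) < (S.choose M₂ : ℝ))]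
      have := Finset.card_filter_le (Finset.univ : Finset {T : Finset (Fin S) // T.card = M₂}) p
      have h' : (Finset.univ.filter p).card ≤ S.choose M₂ := by
        rw [← hcardΩ]
        exact le_trans this (le_of_eq (Finset.card_univ))
      exact_mod_cast h'
    have hsqle : Real.sqrt M₁ ≤ 100 := by
      have hle : (M₁:ℝ) ≤ (100:ℝ)^2 := by
        push_cast
        nlinarith [show (M₁:ℝ) ≤ 10000 by exact_mod_cast (by omega : M₁ ≤ 10000)]
      calc Real.sqrt M₁ ≤ Real.sqrt ((100:ℝ)^2) := Real.sqrt_le_sqrt hle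
        _ = 100 := Real.sqrt_sq (by norm_num)
    have hone : (1:ℝ) ≤ 100 * (Real.sqrt M₁)⁻¹ := by
      rw [← div_eq_mul_inv, le_div_iff₀ hsqrtpos]
      linarith
    exact le_trans hprob1 hone
end
end

section
/- Let N be even, let g ∈ G[X] be the Raz–Yehudayoff polynomial on X = {x_1,…,x_N}, and let φ : X → Y ∪ Z be any bijection with |Y| = |Z| = N/2. Then the partial derivative matrix of g^φ has full rank over G: rank(M_{g^φ}) = 2^{N/2}. -/
set_option maxHeartbeats 1000000
set_option synthInstance.maxHeartbeats 400000


open MvPolynomial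

noncomputable section

section RazYehudayoffProof

namespace RYFR

section SetLemmas

lemma toLeft_union {α β : Type*} [DecidableEq α] [DecidableEq β] (u v : Finset (α ⊕ β)) :
    (u ∪ v).toLeft = u.toLeft ∪ v.toLeft := by
  ext x; simp

lemma toRight_union {α β : Type*} [DecidableEq α] [DecidableEq β] (u v : Finset (α ⊕ β)) :
    (u ∪ v).toRight = u.toRight ∪ v.toRight := by
  ext x; simp

variable {h : ℕ}

def yS (φ : ℕ → Fin h ⊕ Fin h) (s : Finset ℕ) : Finset (Fin h) := (s.image φ).toLeft

def zS (φ : ℕ → Fin h ⊕ Fin h) (s : Finset ℕ) : Finset (Fin h) := (s.image φ).toRight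

lemma yS_union (φ : ℕ → Fin h ⊕ Fin h) (s t : Finset ℕ) :
    yS φ (s ∪ t) = yS φ s ∪ yS φ t := by
  rw [yS, Finset.image_union, toLeft_union]; rfl

lemma zS_union (φ : ℕ → Fin h ⊕ Fin h) (s t : Finset ℕ) :
    zS φ (s ∪ t) = zS φ s ∪ zS φ t := by
  rw [zS, Finset.image_union, toRight_union]; rfl

lemma mem_yS {φ : ℕ → Fin h ⊕ Fin h} {s : Finset ℕ} {a : Fin h} :
    a ∈ yS φ s ↔ ∃ x ∈ s, φ x = Sum.inl a := by
  simp [yS]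

lemma mem_zS {φ : ℕ → Fin h ⊕ Fin h} {s : Finset ℕ} {b : Fin h} :
    b ∈ zS φ s ↔ ∃ x ∈ s, φ x = Sum.inr b := by
  simp [zS]

lemma yS_singleton_inl {φ : ℕ → Fin h ⊕ Fin h} {x : ℕ} {a : Fin h} (hx : φ x = Sum.inl a) :
    yS φ {x} = {a} := by
  ext c; simp [mem_yS, hx, eq_comm]

lemma yS_singleton_inr {φ : ℕ → Fin h ⊕ Fin h} {x : ℕ} {b : Fin h} (hx : φ x = Sum.inr b) :
    yS φ {x} = ∅ := by
  ext c; simp [mem_yS, hx]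

lemma zS_singleton_inr {φ : ℕ → Fin h ⊕ Fin h} {x : ℕ} {b : Fin h} (hx : φ x = Sum.inr b) :
    zS φ {x} = {b} := by
  ext c; simp [mem_zS, hx, eq_comm]

lemma zS_singleton_inl {φ : ℕ → Fin h ⊕ Fin h} {x : ℕ} {a : Fin h} (hx : φ x = Sum.inl a) :
    zS φ {x} = ∅ := by
  ext c; simp [mem_zS, hx]

variable {φ : ℕ → Fin h ⊕ Fin h} {N : ℕ}

lemma yS_zS_card (hinj : Set.InjOn φ (Set.Icc 1 N)) {s : Finset ℕ}
    (hs : s ⊆ Finset.Icc 1 N) :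
    (yS φ s).card + (zS φ s).card = s.card := by
  rw [yS, zS, Finset.card_toLeft_add_card_toRight]
  refine Finset.card_image_of_injOn ?_
  refine hinj.mono ?_
  intro x hx
  have := hs hx
  simpa [Finset.mem_Icc] using Finset.mem_Icc.mp this

lemma yS_disjoint (hinj : Set.InjOn φ (Set.Icc 1 N)) {s t : Finset ℕ}
    (hs : s ⊆ Finset.Icc 1 N) (ht : t ⊆ Finset.Icc 1 N) (hst : Disjoint s t) :
    Disjoint (yS φ s) (yS φ t) := by
  rw [Finset.disjoint_left]
  intro a has hat
  obtain ⟨x, hx, hxa⟩ := mem_yS.mp has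
  obtain ⟨y, hy, hya⟩ := mem_yS.mp hat
  have hxy : x = y := by
    refine hinj ?_ ?_ (hxa.trans hya.symm)
    · simpa [Set.mem_Icc] using Finset.mem_Icc.mp (hs hx)
    · simpa [Set.mem_Icc] using Finset.mem_Icc.mp (ht hy)
  exact Finset.disjoint_left.mp hst hx (hxy ▸ hy)

lemma zS_disjoint (hinj : Set.InjOn φ (Set.Icc 1 N)) {s t : Finset ℕ}
    (hs : s ⊆ Finset.Icc 1 N) (ht : t ⊆ Finset.Icc 1 N) (hst : Disjoint s t) :
    Disjoint (zS φ s) (zS φ t) := by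
  rw [Finset.disjoint_left]
  intro a has hat
  obtain ⟨x, hx, hxa⟩ := mem_zS.mp has
  obtain ⟨y, hy, hya⟩ := mem_zS.mp hat
  have hxy : x = y := by
    refine hinj ?_ ?_ (hxa.trans hya.symm)
    · simpa [Set.mem_Icc] using Finset.mem_Icc.mp (hs hx)
    · simpa [Set.mem_Icc] using Finset.mem_Icc.mp (ht hy)
  exact Finset.disjoint_left.mp hst hx (hxy ▸ hy)

lemma Icc_split (i k j : ℕ) (h1 : i ≤ k) (h2 : k ≤ j) :
    Finset.Icc i j = Finset.Icc i k ∪ Finset.Icc (k+1) j := by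
  ext x; simp only [Finset.mem_Icc, Finset.mem_union]; omega

lemma Icc_disj (i k j : ℕ) : Disjoint (Finset.Icc i k) (Finset.Icc (k+1) j) := by
  rw [Finset.disjoint_left]
  intro x hx hx2
  simp only [Finset.mem_Icc] at hx hx2
  omega

-- discrete intermediate value: crossing zero
lemma cross : ∀ (r : ℕ) (c : ℕ → ℤ), (∀ m, m < r → |c (m+1) - c m| ≤ 2) →
    (∀ m, m ≤ r → c m % 2 = 0) → 0 ≤ c 0 → c r ≤ 0 → ∃ m, m ≤ r ∧ c m = 0 := by
  intro r
  induction r with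
  | zero => intro c _ _ h0 hr; exact ⟨0, le_rfl, le_antisymm hr h0⟩
  | succ r ih =>
    intro c hstep heven h0 hr
    by_cases h1 : 0 ≤ c 1
    · obtain ⟨m, hm, hc⟩ := ih (fun m => c (m+1))
        (fun m hm => hstep (m+1) (by omega))
        (fun m hm => heven (m+1) (by omega)) h1 hr
      exact ⟨m+1, by omega, hc⟩
    · push_neg at h1
      have he1 := heven 1 (by omega)
      have he0 := heven 0 (by omega)
      have habs := abs_le.mp (hstep 0 (by omega))
      have hx : (0:ℕ)+1 = 1 := rfl
      rw [hx] at habs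
      exact ⟨0, by omega, by omega⟩

lemma ivt (c : ℕ → ℤ) (r : ℕ) (D : ℤ)
    (hstep : ∀ m, m < r → |c (m+1) - c m| ≤ 2)
    (heven : ∀ m, m ≤ r → c m % 2 = 0)
    (hDeven : D % 2 = 0)
    (h0 : 0 ≤ c 0 ∧ c 0 ≤ 2)
    (hend : 0 ≤ D - c r ∧ D - c r ≤ 2) :
    ∃ m, m ≤ r ∧ ((0 ≤ c m ∧ c m ≤ D) ∨ (D ≤ c m ∧ c m ≤ 0)) := by
  by_cases hD2 : 2 ≤ D
  · exact ⟨0, Nat.zero_le _, Or.inl ⟨h0.1, by omega⟩⟩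
  · have hD0 : D ≤ 0 := by omega
    have hcr := heven r le_rfl
    by_cases hcrD : c r = D
    · exact ⟨r, le_rfl, Or.inr ⟨by omega, by omega⟩⟩
    · have hcr2 : c r ≤ 0 := by omega
      obtain ⟨m, hm, hc⟩ := cross r c hstep heven h0.1 hcr2
      exact ⟨m, hm, Or.inr ⟨by omega, by omega⟩⟩

lemma min_split_arith (y1 z1 y2 z2 : ℕ)
    (hbet : (0 ≤ (y1:ℤ) - z1 ∧ (y1:ℤ) - z1 ≤ ((y1:ℤ)+y2) - ((z1:ℤ)+z2)) ∨
            (((y1:ℤ)+y2) - ((z1:ℤ)+z2) ≤ (y1:ℤ) - z1 ∧ (y1:ℤ) - z1 ≤ 0)) :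
    min y1 z1 + min y2 z2 = min (y1+y2) (z1+z2) := by omega


lemma card_yS_pos {s : Finset ℕ} {x : ℕ} {a : Fin h} (hx : x ∈ s) (ha : φ x = Sum.inl a) :
    1 ≤ (yS φ s).card :=
  Finset.card_pos.mpr ⟨a, mem_yS.mpr ⟨x, hx, ha⟩⟩

lemma card_zS_pos {s : Finset ℕ} {x : ℕ} {b : Fin h} (hx : x ∈ s) (hb : φ x = Sum.inr b) :
    1 ≤ (zS φ s).card :=
  Finset.card_pos.mpr ⟨b, mem_zS.mpr ⟨x, hx, hb⟩⟩

lemma exists_split (hinj : Set.InjOn φ (Set.Icc 1 N))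
    {i j : ℕ} (h1 : 1 ≤ i) (hjN : j ≤ N) (hlen : i + 3 ≤ j) (hpar : (j - i) % 2 = 1)
    (hside : (∃ a a', φ i = Sum.inl a ∧ φ j = Sum.inl a') ∨
             (∃ b b', φ i = Sum.inr b ∧ φ j = Sum.inr b')) :
    ∃ k, (i + 1 ≤ k ∧ k ≤ j - 2) ∧ (k - i) % 2 = 1 ∧
      min (yS φ (Finset.Icc i k)).card (zS φ (Finset.Icc i k)).card
        + min (yS φ (Finset.Icc (k+1) j)).card (zS φ (Finset.Icc (k+1) j)).card
        = min (yS φ (Finset.Icc i j)).card (zS φ (Finset.Icc i j)).card := by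
  obtain ⟨r, hr⟩ : ∃ r, j = i + 3 + 2*r := ⟨(j - i - 3)/2, by omega⟩
  have hsub : ∀ a b : ℕ, 1 ≤ a → b ≤ N → Finset.Icc a b ⊆ Finset.Icc 1 N := by
    intro a b ha hb x hx
    simp only [Finset.mem_Icc] at hx ⊢
    omega
  set Y : ℕ → ℕ := fun l => (yS φ (Finset.Icc i l)).card with hY
  set Z : ℕ → ℕ := fun l => (zS φ (Finset.Icc i l)).card with hZ
  have hYZ : ∀ l, i ≤ l → l ≤ j → Y l + Z l = l + 1 - i := by
    intro l hil hlj
    rw [hY, hZ]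
    have := yS_zS_card hinj (hsub i l h1 (by omega))
    rw [this, Nat.card_Icc]
  have hYadd : ∀ k l, i ≤ k → k ≤ l → l ≤ j →
      Y l = Y k + (yS φ (Finset.Icc (k+1) l)).card ∧
      Z l = Z k + (zS φ (Finset.Icc (k+1) l)).card := by
    intro k l hik hkl hlj
    have hspl := Icc_split i k l hik hkl
    constructor
    · rw [hY]
      show (yS φ (Finset.Icc i l)).card = _
      rw [hspl, yS_union, Finset.card_union_of_disjoint
        (yS_disjoint hinj (hsub i k h1 (by omega)) (hsub (k+1) l (by omega) (by omega))
          (Icc_disj i k l))]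
    · rw [hZ]
      show (zS φ (Finset.Icc i l)).card = _
      rw [hspl, zS_union, Finset.card_union_of_disjoint
        (zS_disjoint hinj (hsub i k h1 (by omega)) (hsub (k+1) l (by omega) (by omega))
          (Icc_disj i k l))]
  have hpaircard : ∀ k, i ≤ k → k + 2 ≤ j →
      (yS φ (Finset.Icc (k+1) (k+2))).card + (zS φ (Finset.Icc (k+1) (k+2))).card = 2 := by
    intro k hik hkj
    rw [yS_zS_card hinj (hsub (k+1) (k+2) (by omega) (by omega)), Nat.card_Icc]
    omega
  set c : ℕ → ℤ := fun m => (Y (i+1+2*m) : ℤ) - (Z (i+1+2*m) : ℤ) with hc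
  set D : ℤ := (Y j : ℤ) - (Z j : ℤ) with hD
  have hstep : ∀ m, m < r → |c (m+1) - c m| ≤ 2 := by
    intro m hm
    have hk : i + 1 + 2*(m+1) = (i+1+2*m) + 2 := by ring
    have hadd := hYadd (i+1+2*m) (i+1+2*m+2) (by omega) (by omega) (by omega)
    have hpc := hpaircard (i+1+2*m) (by omega) (by omega)
    rw [abs_le]
    rw [hc]
    simp only
    rw [hk, hadd.1, hadd.2]
    push_cast
    omega
  have heven : ∀ m, m ≤ r → c m % 2 = 0 := by
    intro m hm
    have := hYZ (i+1+2*m) (by omega) (by omega)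
    rw [hc]
    simp only
    omega
  have hDeven : D % 2 = 0 := by
    have := hYZ j (by omega) le_rfl
    rw [hD]
    omega
  have hc0 : Y (i+1) + Z (i+1) = 2 := by
    have := hYZ (i+1) (by omega) (by omega)
    omega
  have hcrj : i + 1 + 2*r = j - 2 := by omega
  have hendsplit := hYadd (j-2) j (by omega) (by omega) le_rfl
  have hendcard : (yS φ (Finset.Icc (j-2+1) j)).card + (zS φ (Finset.Icc (j-2+1) j)).card
      = 2 := by
    rw [yS_zS_card hinj (hsub (j-2+1) j (by omega) (by omega)), Nat.card_Icc]
    omega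
  have hc0eq : c 0 = (Y (i+1) : ℤ) - (Z (i+1) : ℤ) := by
    simp [hc]
  have hcreq : c r = (Y (j-2) : ℤ) - (Z (j-2) : ℤ) := by
    simp only [hc, hcrj]
  have hbet : ∃ m, m ≤ r ∧ ((0 ≤ c m ∧ c m ≤ D) ∨ (D ≤ c m ∧ c m ≤ 0)) := by
    have hes1 := hendsplit.1
    have hes2 := hendsplit.2
    rcases hside with ⟨a, a', hia, hja⟩ | ⟨b, b', hib, hjb⟩
    · have hy1 : 1 ≤ Y (i+1) := card_yS_pos (by simp [Finset.mem_Icc]) hia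
      have hy2 : 1 ≤ (yS φ (Finset.Icc (j-2+1) j)).card :=
        card_yS_pos (by simp [Finset.mem_Icc]; omega) hja
      refine ivt c r D hstep heven hDeven ⟨?_, ?_⟩ ⟨?_, ?_⟩
      · rw [hc0eq]; omega
      · rw [hc0eq]; omega
      · rw [hD, hcreq]; omega
      · rw [hD, hcreq]; omega
    · have hz1 : 1 ≤ Z (i+1) := card_zS_pos (by simp [Finset.mem_Icc]) hib
      have hz2 : 1 ≤ (zS φ (Finset.Icc (j-2+1) j)).card :=
        card_zS_pos (by simp [Finset.mem_Icc]; omega) hjb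
      have hstep' : ∀ m, m < r → |(-(c (m+1))) - (-(c m))| ≤ 2 := by
        intro m hm
        have heq : (-(c (m+1))) - (-(c m)) = c m - c (m+1) := by ring
        rw [heq, abs_sub_comm]
        exact hstep m hm
      have heven' : ∀ m, m ≤ r → (-(c m)) % 2 = 0 := by
        intro m hm; have := heven m hm; omega
      have h0' : 0 ≤ -(c 0) ∧ -(c 0) ≤ 2 := by rw [hc0eq]; constructor <;> omega
      have hend' : 0 ≤ (-D) - (-(c r)) ∧ (-D) - (-(c r)) ≤ 2 := by
        rw [hD, hcreq]; constructor <;> omega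
      obtain ⟨m, hm', hbm⟩ := ivt (fun m => -(c m)) r (-D) hstep' heven' (by omega) h0' hend'
      exact ⟨m, hm', by omega⟩
  obtain ⟨m, hm, hb⟩ := hbet
  have hcm : c m = (Y (i+1+2*m) : ℤ) - (Z (i+1+2*m) : ℤ) := by simp only [hc]
  have hDval : D = ((Y j : ℤ)) - (Z j : ℤ) := hD
  refine ⟨i+1+2*m, ⟨by omega, by omega⟩, by omega, ?_⟩
  have hadd := hYadd (i+1+2*m) j (by omega) (by omega) le_rfl
  show min (Y (i+1+2*m)) (Z (i+1+2*m))
      + min ((yS φ (Finset.Icc (i+1+2*m+1) j)).card) ((zS φ (Finset.Icc (i+1+2*m+1) j)).card)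
      = min (Y j) (Z j)
  rw [hadd.1, hadd.2]
  refine min_split_arith _ _ _ _ ?_
  omega


end SetLemmas

section PdmLemmas

variable {h : ℕ} {K : Type*} [CommRing K]

def Emon (S T : Finset (Fin h)) : (Fin h ⊕ Fin h) →₀ ℕ :=
  (∑ i ∈ S, Finsupp.single (Sum.inl i) 1) + ∑ j ∈ T, Finsupp.single (Sum.inr j) 1

lemma pdm_apply (f : MvPolynomial (Fin h ⊕ Fin h) K) (S T : Finset (Fin h)) :
    pdm f S T = f.coeff (Emon S T) := rfl

lemma Emon_apply_inl (S T : Finset (Fin h)) (a : Fin h) :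
    Emon S T (Sum.inl a) = if a ∈ S then 1 else 0 := by
  classical
  simp [Emon, Finsupp.finset_sum_apply, Finsupp.single_apply]

lemma Emon_apply_inr (S T : Finset (Fin h)) (b : Fin h) :
    Emon S T (Sum.inr b) = if b ∈ T then 1 else 0 := by
  classical
  simp [Emon, Finsupp.finset_sum_apply, Finsupp.single_apply]

lemma Emon_support (S T : Finset (Fin h)) : (Emon S T).support ⊆ S.disjSum T := by
  intro u hu
  rw [Finsupp.mem_support_iff] at hu
  rcases u with a | b
  · rw [Emon_apply_inl] at hu
    by_cases haS : a ∈ S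
    · exact Finset.inl_mem_disjSum.mpr haS
    · simp [haS] at hu
  · rw [Emon_apply_inr] at hu
    by_cases hbT : b ∈ T
    · exact Finset.inr_mem_disjSum.mpr hbT
    · simp [hbT] at hu

lemma Emon_add (S₁ T₁ S₂ T₂ : Finset (Fin h)) (hS : Disjoint S₁ S₂) (hT : Disjoint T₁ T₂) :
    Emon (S₁ ∪ S₂) (T₁ ∪ T₂) = Emon S₁ T₁ + Emon S₂ T₂ := by
  unfold Emon
  rw [Finset.sum_union hS, Finset.sum_union hT]
  abel

lemma Emon_empty : (Emon (∅ : Finset (Fin h)) ∅) = 0 := by simp [Emon]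

lemma coeff_mul_of_disjoint {τ : Type*} [DecidableEq τ] {p q : MvPolynomial τ K}
    {A B : Finset τ} (hAB : Disjoint A B)
    (hp : ∀ d ∈ p.support, d.support ⊆ A) (hq : ∀ d ∈ q.support, d.support ⊆ B)
    {d₁ d₂ : τ →₀ ℕ} (h₁ : d₁.support ⊆ A) (h₂ : d₂.support ⊆ B) :
    coeff (d₁ + d₂) (p * q) = coeff d₁ p * coeff d₂ q := by
  rw [coeff_mul]
  refine Finset.sum_eq_single_of_mem (d₁, d₂) (Finset.HasAntidiagonal.mem_antidiagonal.mpr rfl) ?_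
  · rintro ⟨u, v⟩ hmem hne
    rw [Finset.HasAntidiagonal.mem_antidiagonal] at hmem
    by_contra hzero
    have hu : u ∈ p.support := by
      rw [mem_support_iff]; intro h0; exact hzero (by rw [h0, zero_mul])
    have hv : v ∈ q.support := by
      rw [mem_support_iff]; intro h0; exact hzero (by rw [h0, mul_zero])
    have hus := hp u hu
    have hvs := hq v hv
    have hval : ∀ a, u a + v a = d₁ a + d₂ a := fun a => by
      have := DFunLike.congr_fun hmem a; simpa using this
    have memflag : ∀ (w : τ →₀ ℕ) (C : Finset τ), w.support ⊆ C → ∀ a, a ∉ C → w a = 0 := by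
      intro w C hC a ha
      by_contra h0
      exact ha (hC (Finsupp.mem_support_iff.mpr h0))
    apply hne
    have hu1 : u = d₁ := by
      ext a
      by_cases haA : a ∈ A
      · have hva : v a = 0 := memflag v B hvs a (Finset.disjoint_left.mp hAB haA)
        have hd2a : d₂ a = 0 := memflag d₂ B h₂ a (Finset.disjoint_left.mp hAB haA)
        have := hval a; omega
      · rw [memflag u A hus a haA, memflag d₁ A h₁ a haA]
    have hv1 : v = d₂ := by
      ext a
      by_cases haB : a ∈ B
      · have : u a = 0 := memflag u A hus a (Finset.disjoint_right.mp hAB haB)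
        have hd1a : d₁ a = 0 := memflag d₁ A h₁ a (Finset.disjoint_right.mp hAB haB)
        have := hval a; omega
      · rw [memflag v B hvs a haB, memflag d₂ B h₂ a haB]
    exact Prod.ext hu1 hv1

lemma pdm_map {L : Type*} [CommRing L] (ψ : K →+* L) (f : MvPolynomial (Fin h ⊕ Fin h) K) :
    pdm (map ψ f) = (pdm f).map ψ := by
  ext S T
  simp [pdm_apply, Matrix.map_apply, coeff_map]

def Wit (M : Matrix (Finset (Fin h)) (Finset (Fin h)) K) (Ys Zs : Finset (Fin h)) (s : ℕ) :
    Prop :=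
  ∃ e f : Fin s → Finset (Fin h), Function.Injective e ∧ Function.Injective f ∧
    (∀ a, e a ⊆ Ys) ∧ (∀ a, f a ⊆ Zs) ∧ (M.submatrix e f).det ≠ 0

lemma Wit.mono {M : Matrix (Finset (Fin h)) (Finset (Fin h)) K} {Ys Zs : Finset (Fin h)} {s : ℕ}
    (w : Wit M Ys Zs s) {Ys' Zs' : Finset (Fin h)} (hY : Ys ⊆ Ys') (hZ : Zs ⊆ Zs') :
    Wit M Ys' Zs' s := by
  obtain ⟨e, f, he, hf, hYe, hZf, hd⟩ := w
  exact ⟨e, f, he, hf, fun a => (hYe a).trans hY, fun a => (hZf a).trans hZ, hd⟩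

lemma Wit.of_map {L : Type*} [CommRing L] (ψ : K →+* L)
    {M : Matrix (Finset (Fin h)) (Finset (Fin h)) K} {Ys Zs : Finset (Fin h)} {s : ℕ}
    (w : Wit (M.map ψ) Ys Zs s) : Wit M Ys Zs s := by
  obtain ⟨e, f, he, hf, hYe, hZf, hd⟩ := w
  refine ⟨e, f, he, hf, hYe, hZf, fun h0 => hd ?_⟩
  rw [Matrix.submatrix_map, ← RingHom.mapMatrix_apply, ← RingHom.map_det, h0, map_zero]

lemma union_inj_aux {Y₁ Y₂ : Finset (Fin h)} (hY : Disjoint Y₁ Y₂)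
    {s t : ℕ} {e₁ : Fin s → Finset (Fin h)} {e₂ : Fin t → Finset (Fin h)}
    (hY₁ : ∀ a, e₁ a ⊆ Y₁) (hY₂ : ∀ a, e₂ a ⊆ Y₂)
    (he₁ : Function.Injective e₁) (he₂ : Function.Injective e₂)
    {a a' : Fin s} {b b' : Fin t} (heq : e₁ a ∪ e₂ b = e₁ a' ∪ e₂ b') : a = a' ∧ b = b' := by
  have key : ∀ (a : Fin s) (b : Fin t), (e₁ a ∪ e₂ b) ∩ Y₁ = e₁ a := by
    intro a b
    ext x
    simp only [Finset.mem_inter, Finset.mem_union]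
    constructor
    · rintro ⟨hx | hx, hx1⟩
      · exact hx
      · exact absurd hx1 (Finset.disjoint_right.mp hY (hY₂ b hx))
    · intro hx
      exact ⟨Or.inl hx, hY₁ a hx⟩
  have key2 : ∀ (a : Fin s) (b : Fin t), (e₁ a ∪ e₂ b) ∩ Y₂ = e₂ b := by
    intro a b
    ext x
    simp only [Finset.mem_inter, Finset.mem_union]
    constructor
    · rintro ⟨hx | hx, hx1⟩
      · exact absurd hx1 (Finset.disjoint_left.mp hY (hY₁ a hx))
      · exact hx
    · intro hx
      exact ⟨Or.inr hx, hY₂ b hx⟩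
  constructor
  · apply he₁; rw [← key a b, ← key a' b', heq]
  · apply he₂; rw [← key2 a b, ← key2 a' b', heq]

open Matrix Kronecker in
lemma Wit.mul [IsDomain K] {q₁ q₂ : MvPolynomial (Fin h ⊕ Fin h) K}
    {Y₁ Z₁ Y₂ Z₂ : Finset (Fin h)} {s t : ℕ}
    (hv₁ : ∀ d ∈ q₁.support, d.support ⊆ Y₁.disjSum Z₁)
    (hv₂ : ∀ d ∈ q₂.support, d.support ⊆ Y₂.disjSum Z₂)
    (hY : Disjoint Y₁ Y₂) (hZ : Disjoint Z₁ Z₂)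
    (w₁ : Wit (pdm q₁) Y₁ Z₁ s) (w₂ : Wit (pdm q₂) Y₂ Z₂ t) :
    Wit (pdm (q₁ * q₂)) (Y₁ ∪ Y₂) (Z₁ ∪ Z₂) (s * t) := by
  classical
  obtain ⟨e₁, f₁, he₁, hf₁, hY₁, hZ₁, hd₁⟩ := w₁
  obtain ⟨e₂, f₂, he₂, hf₂, hY₂, hZ₂, hd₂⟩ := w₂
  have hdisjAB : Disjoint (Y₁.disjSum Z₁) (Y₂.disjSum Z₂) := by
    rw [Finset.disjoint_left]
    rintro (x | x) hx hx2
    · rw [Finset.inl_mem_disjSum] at hx hx2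
      exact Finset.disjoint_left.mp hY hx hx2
    · rw [Finset.inr_mem_disjSum] at hx hx2
      exact Finset.disjoint_left.mp hZ hx hx2
  have key : ∀ S₁ T₁ S₂ T₂ : Finset (Fin h), S₁ ⊆ Y₁ → T₁ ⊆ Z₁ → S₂ ⊆ Y₂ → T₂ ⊆ Z₂ →
      pdm (q₁ * q₂) (S₁ ∪ S₂) (T₁ ∪ T₂) = pdm q₁ S₁ T₁ * pdm q₂ S₂ T₂ := by
    intro S₁ T₁ S₂ T₂ hS₁ hT₁ hS₂ hT₂
    rw [pdm_apply, pdm_apply, pdm_apply,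
      Emon_add _ _ _ _ (hY.mono hS₁ hS₂) (hZ.mono hT₁ hT₂)]
    exact coeff_mul_of_disjoint hdisjAB hv₁ hv₂
      ((Emon_support _ _).trans (Finset.disjSum_mono hS₁ hT₁))
      ((Emon_support _ _).trans (Finset.disjSum_mono hS₂ hT₂))
  let ε : Fin (s * t) ≃ Fin s × Fin t := finProdFinEquiv.symm
  refine ⟨fun x => e₁ (ε x).1 ∪ e₂ (ε x).2, fun x => f₁ (ε x).1 ∪ f₂ (ε x).2, ?_, ?_, ?_, ?_, ?_⟩
  · intro x y hxy
    obtain ⟨h1, h2⟩ := union_inj_aux hY hY₁ hY₂ he₁ he₂ hxy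
    have : ε x = ε y := Prod.ext h1 h2
    exact ε.injective this
  · intro x y hxy
    obtain ⟨h1, h2⟩ := union_inj_aux hZ hZ₁ hZ₂ hf₁ hf₂ hxy
    exact ε.injective (Prod.ext h1 h2)
  · intro a
    exact Finset.union_subset ((hY₁ _).trans Finset.subset_union_left)
      ((hY₂ _).trans Finset.subset_union_right)
  · intro a
    exact Finset.union_subset ((hZ₁ _).trans Finset.subset_union_left)
      ((hZ₂ _).trans Finset.subset_union_right)
  · have hsub : (pdm (q₁ * q₂)).submatrix (fun x => e₁ (ε x).1 ∪ e₂ (ε x).2)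
        (fun x => f₁ (ε x).1 ∪ f₂ (ε x).2) =
        ((((pdm q₁).submatrix e₁ f₁)) ⊗ₖ (((pdm q₂).submatrix e₂ f₂))).submatrix ε ε := by
      ext x y
      simp only [Matrix.submatrix_apply, Matrix.kronecker_apply]
      exact key _ _ _ _ (hY₁ _) (hZ₁ _) (hY₂ _) (hZ₂ _)
    rw [hsub, Matrix.det_submatrix_equiv_self, Matrix.det_kronecker]
    exact mul_ne_zero (pow_ne_zero _ hd₁) (pow_ne_zero _ hd₂)

lemma X_mul_X_eq_monomial (u v : Fin h ⊕ Fin h) :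
    (X u * X v : MvPolynomial (Fin h ⊕ Fin h) K) =
      monomial (Finsupp.single u 1 + Finsupp.single v 1) 1 := by
  rw [X, X, monomial_mul, one_mul]

lemma single_add_single_ne_zero (u v : Fin h ⊕ Fin h) :
    Finsupp.single u 1 + Finsupp.single v 1 ≠ (0 : (Fin h ⊕ Fin h) →₀ ℕ) := by
  intro H
  have := DFunLike.congr_fun H u
  simp [Finsupp.single_apply] at this

lemma coeff_zero_one_add_X_mul_X (u v : Fin h ⊕ Fin h) :
    coeff 0 ((1 : MvPolynomial (Fin h ⊕ Fin h) K) + X u * X v) = 1 := by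
  rw [coeff_add, X_mul_X_eq_monomial, coeff_monomial, coeff_zero_one,
    if_neg (single_add_single_ne_zero u v), add_zero]

lemma vec2_injective {α : Type*} {u v : α} (huv : u ≠ v) :
    Function.Injective ![u, v] := by
  intro x y hxy
  fin_cases x <;> fin_cases y <;> simp_all

lemma vec1_injective {α : Type*} (u : α) : Function.Injective ![u] :=
  fun x y _ => Subsingleton.elim x y

lemma wit_one_entry [Nontrivial K] {q : MvPolynomial (Fin h ⊕ Fin h) K}
    (hq : coeff 0 q = 1) (Ys Zs : Finset (Fin h)) : Wit (pdm q) Ys Zs 1 := by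
  refine ⟨![∅], ![∅], vec1_injective _, vec1_injective _,
    fun a => by fin_cases a <;> simp, fun a => by fin_cases a <;> simp, ?_⟩
  rw [Matrix.det_fin_one]
  simp only [Matrix.submatrix_apply]
  show pdm q ∅ ∅ ≠ 0
  rw [pdm_apply]
  have : Emon (∅ : Finset (Fin h)) ∅ = 0 := by simp [Emon]
  rw [this, hq]
  exact one_ne_zero

lemma Emon_singleton_left (a : Fin h) :
    Emon {a} (∅ : Finset (Fin h)) = Finsupp.single (Sum.inl a) 1 := by simp [Emon]

lemma Emon_singleton_right (b : Fin h) :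
    Emon (∅ : Finset (Fin h)) {b} = Finsupp.single (Sum.inr b) 1 := by simp [Emon]

lemma Emon_singleton_both (a b : Fin h) :
    Emon ({a} : Finset (Fin h)) {b} =
      Finsupp.single (Sum.inl (α := Fin h) a) 1 + Finsupp.single (Sum.inr (β := Fin h) b) 1 := by
  simp [Emon]

lemma wit_base [Nontrivial K] (a b : Fin h) :
    Wit (pdm ((1 : MvPolynomial (Fin h ⊕ Fin h) K) + X (Sum.inl a) * X (Sum.inr b))) {a} {b} 2 := by
  set u0 : (Fin h ⊕ Fin h) →₀ ℕ :=
    Finsupp.single (Sum.inl a) 1 + Finsupp.single (Sum.inr b) 1 with hu0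
  have hne0 : u0 ≠ 0 := single_add_single_ne_zero _ _
  have hneL : u0 ≠ Finsupp.single (Sum.inl a) 1 := by
    intro H
    have := DFunLike.congr_fun H (Sum.inr b)
    simp [hu0, Finsupp.single_apply] at this
  have hneR : u0 ≠ Finsupp.single (Sum.inr b) 1 := by
    intro H
    have := DFunLike.congr_fun H (Sum.inl a)
    simp [hu0, Finsupp.single_apply] at this
  have hsingle_ne : Finsupp.single (Sum.inl (α := Fin h) (β := Fin h) a) (1:ℕ) ≠ 0 := by
    intro H
    have := DFunLike.congr_fun H (Sum.inl a)
    simp [Finsupp.single_apply] at this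
  have hsingle_ne' : Finsupp.single (Sum.inr (α := Fin h) (β := Fin h) b) (1:ℕ) ≠ 0 := by
    intro H
    have := DFunLike.congr_fun H (Sum.inr b)
    simp [Finsupp.single_apply] at this
  refine ⟨![∅, {a}], ![∅, {b}], vec2_injective (Finset.singleton_ne_empty a).symm,
    vec2_injective (Finset.singleton_ne_empty b).symm,
    ?_, ?_, ?_⟩
  · intro x; fin_cases x <;> simp
  · intro x; fin_cases x <;> simp
  · rw [Matrix.det_fin_two]
    simp only [Matrix.submatrix_apply]
    have e00 : pdm ((1 : MvPolynomial (Fin h ⊕ Fin h) K) + X (Sum.inl a) * X (Sum.inr b)) ∅ ∅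
        = 1 := by
      rw [pdm_apply]
      have : Emon (∅ : Finset (Fin h)) ∅ = 0 := by simp [Emon]
      rw [this]; exact coeff_zero_one_add_X_mul_X _ _
    have e01 : pdm ((1 : MvPolynomial (Fin h ⊕ Fin h) K) + X (Sum.inl a) * X (Sum.inr b)) ∅ {b}
        = 0 := by
      rw [pdm_apply, Emon_singleton_right, coeff_add, X_mul_X_eq_monomial, coeff_monomial,
        coeff_one, if_neg hsingle_ne'.symm, if_neg (fun H => hneR H), add_zero]
    have e10 : pdm ((1 : MvPolynomial (Fin h ⊕ Fin h) K) + X (Sum.inl a) * X (Sum.inr b)) {a} ∅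
        = 0 := by
      rw [pdm_apply, Emon_singleton_left, coeff_add, X_mul_X_eq_monomial, coeff_monomial,
        coeff_one, if_neg hsingle_ne.symm, if_neg (fun H => hneL H), add_zero]
    have e11 : pdm ((1 : MvPolynomial (Fin h ⊕ Fin h) K) + X (Sum.inl a) * X (Sum.inr b)) {a} {b}
        = 1 := by
      rw [pdm_apply, Emon_singleton_both, coeff_add, X_mul_X_eq_monomial, coeff_monomial,
        coeff_one, if_neg (fun H => hne0 H.symm), if_pos rfl,
        zero_add]
    simp only [Matrix.cons_val_zero, Matrix.cons_val_one, Matrix.head_cons]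
    rw [e00, e01, e10, e11]
    simp

open Polynomial in
lemma coeff_det_top {n : Type*} [Fintype n] [DecidableEq n] (A B : Matrix n n K) :
    (Matrix.det (Matrix.of fun i j => Polynomial.C (A i j) + Polynomial.X * Polynomial.C (B i j))).coeff
      (Fintype.card n) = B.det := by
  rw [Matrix.det_apply, Matrix.det_apply, Polynomial.finset_sum_coeff]
  refine Finset.sum_congr rfl ?_
  intro σ _
  have hcard : Fintype.card n = (Finset.univ : Finset n).card * 1 := by simp
  have hprod : (∏ i, (Matrix.of fun i j => Polynomial.C (A i j) +
        Polynomial.X * Polynomial.C (B i j)) (σ i) i).coeff (Fintype.card n)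
      = ∏ i, B (σ i) i := by
    rw [hcard, Polynomial.coeff_prod_of_natDegree_le]
    · refine Finset.prod_congr rfl ?_
      intro i _
      simp only [Matrix.of_apply]
      rw [Polynomial.coeff_add, Polynomial.coeff_C, if_neg (by norm_num)]
      rw [show (1 : ℕ) = 0 + 1 from rfl, Polynomial.coeff_X_mul, Polynomial.coeff_C_zero,
        zero_add]
    · intro p _
      simp only [Matrix.of_apply]
      refine le_trans (Polynomial.natDegree_add_le _ _) ?_
      simp only [Polynomial.natDegree_C, max_le_iff]
      refine ⟨Nat.zero_le _, le_trans (Polynomial.natDegree_mul_le) ?_⟩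
      simp [Polynomial.natDegree_X_le]
  rw [Polynomial.coeff_smul, hprod]


end PdmLemmas

section RankLemmas

variable {h : ℕ}

lemma rank_ge_of_wit {K : Type*} [Field K]
    {M : Matrix (Finset (Fin h)) (Finset (Fin h)) K} {Ys Zs : Finset (Fin h)} {s : ℕ}
    (w : Wit M Ys Zs s) : s ≤ M.rank := by
  classical
  obtain ⟨e, f, he, hf, _, _, hd⟩ := w
  have hunit : IsUnit (M.submatrix e f) := by
    rw [Matrix.isUnit_iff_isUnit_det, isUnit_iff_ne_zero]
    exact hd
  have hrows : LinearIndependent K (fun a => (M.submatrix e f) a) :=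
    Matrix.linearIndependent_rows_iff_isUnit.mpr hunit
  have hrows2 : LinearIndependent K (fun a => M (e a)) := by
    refine LinearIndependent.of_comp (LinearMap.funLeft K K f) ?_
    exact hrows
  have h1 : M.rank = Module.finrank K (Submodule.span K (Set.range M)) :=
    Matrix.rank_eq_finrank_span_row M
  have h2 : Module.finrank K (Submodule.span K (Set.range fun a => M (e a))) = s := by
    rw [finrank_span_eq_card hrows2, Fintype.card_fin]
  rw [h1, ← h2]
  refine Submodule.finrank_mono (Submodule.span_mono ?_)
  exact Set.range_comp_subset_range e M

lemma support_rename_sub {K : Type*} [CommRing K] (φ : ℕ → Fin h ⊕ Fin h)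
    (p : MvPolynomial ℕ K) (s : Finset ℕ) (hv : p.vars ⊆ s) :
    ∀ d ∈ (rename φ p).support, d.support ⊆ (yS φ s).disjSum (zS φ s) := by
  intro d hd v hvd
  have h1 : v ∈ (rename φ p).vars := (mem_vars v).mpr ⟨d, hd, hvd⟩
  have h2 := vars_rename φ p h1
  rw [Finset.mem_image] at h2
  obtain ⟨x, hx, rfl⟩ := h2
  have hxs : x ∈ s := hv hx
  have hmem : φ x ∈ s.image φ := Finset.mem_image_of_mem φ hxs
  rw [← Finset.toLeft_disjSum_toRight (u := s.image φ)] at hmem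
  exact hmem

lemma vars_one_add_X_mul_X {K : Type*} [CommRing K] [Nontrivial K] (i j : ℕ) :
    ((1 : MvPolynomial ℕ K) + X i * X j).vars ⊆ {i, j} := by
  refine (vars_add_subset _ _).trans ?_
  intro v hv
  rw [Finset.mem_union, vars_one] at hv
  rcases hv with h0 | h0
  · simp at h0
  · have := vars_mul _ _ h0
    rw [Finset.mem_union] at this
    simp only [Finset.mem_insert, Finset.mem_singleton]
    rcases this with hv' | hv'
    · rw [vars_X, Finset.mem_singleton] at hv'
      exact Or.inl hv'
    · rw [vars_X, Finset.mem_singleton] at hv'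
      exact Or.inr hv'


end RankLemmas

section RYpoly

abbrev Rng (F : Type) [Field F] := MvPolynomial (ℕ × ℕ × ℕ) F

def RYp (F : Type) [Field F] : ℕ → ℕ → ℕ → MvPolynomial ℕ (Rng F)
  | 0, _, _ => 1
  | fuel + 1, i, j =>
      if j < i then 1
      else (1 + X i * X j) * RYp F fuel (i + 1) (j - 1)
        + ∑ k ∈ (Finset.Icc (i + 1) (j - 2)).filter (fun k => (k - i) % 2 = 1),
            C (X (i, k, j)) * RYp F fuel i k * RYp F fuel (k + 1) j

variable {F : Type} [Field F]

lemma RYp_empty (fuel i j : ℕ) (hij : j < i) : RYp F fuel i j = 1 := by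
  cases fuel <;> simp [RYp, hij]

lemma map_RYp : ∀ (fuel i j : ℕ),
    map (algebraMap (Rng F) (Gf F)) (RYp F fuel i j) = RY F fuel i j := by
  intro fuel
  induction fuel with
  | zero => intro i j; simp [RYp, RY]
  | succ fuel ih =>
    intro i j
    rw [RYp, RY]
    split_ifs with hij
    · simp
    · rw [map_add, map_mul, map_sum]
      congr 1
      · rw [ih, map_add, map_one, map_mul, MvPolynomial.map_X, MvPolynomial.map_X]
      · refine Finset.sum_congr rfl fun k _ => ?_
        rw [map_mul, map_mul, MvPolynomial.map_C, ih, ih]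
        rfl

lemma map_RYp_congr {S : Type*} [CommRing S] {κ₁ κ₂ : Rng F →+* S} :
    ∀ (fuel i j : ℕ), (∀ a b c : ℕ, i ≤ a → a < b → b + 2 ≤ c → c ≤ j →
        κ₁ (MvPolynomial.X (a,b,c)) = κ₂ (MvPolynomial.X (a,b,c))) →
      map κ₁ (RYp F fuel i j) = map κ₂ (RYp F fuel i j) := by
  intro fuel
  induction fuel with
  | zero => intro i j _; simp [RYp]
  | succ fuel ih =>
    intro i j hw
    rw [RYp]
    split_ifs with hij
    · simp
    · rw [map_add, map_add, map_mul, map_mul, map_sum, map_sum]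
      congr 1
      · congr 1
        · rw [map_add, map_add, map_one, map_one, map_mul, map_mul,
            MvPolynomial.map_X, MvPolynomial.map_X, MvPolynomial.map_X, MvPolynomial.map_X]
        · exact ih (i+1) (j-1) fun a b c h1 h2 h3 h4 => hw a b c (by omega) h2 h3 (by omega)
      · refine Finset.sum_congr rfl fun k hk => ?_
        simp only [Finset.mem_filter, Finset.mem_Icc] at hk
        rw [map_mul, map_mul, map_mul, map_mul, MvPolynomial.map_C, MvPolynomial.map_C]
        rw [hw i k j le_rfl (by omega) (by omega) le_rfl]
        rw [ih i k fun a b c h1 h2 h3 h4 => hw a b c h1 h2 h3 (by omega)]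
        rw [ih (k+1) j fun a b c h1 h2 h3 h4 => hw a b c (by omega) h2 h3 h4]

lemma vars_RYp : ∀ (fuel i j : ℕ), (RYp F fuel i j).vars ⊆ Finset.Icc i j := by
  intro fuel
  induction fuel with
  | zero => intro i j; simp [RYp]
  | succ fuel ih =>
    intro i j
    rw [RYp]
    split_ifs with hij
    · simp
    · refine (vars_add_subset _ _).trans ?_
      intro v hv
      rw [Finset.mem_union] at hv
      rw [Finset.mem_Icc]
      rcases hv with hv | hv
      · have := vars_mul _ _ hv
        rw [Finset.mem_union] at this
        rcases this with hv' | hv'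
        · have := vars_add_subset _ _ hv'
          rw [Finset.mem_union, vars_one] at this
          rcases this with h0 | h0
          · simp at h0
          · have := vars_mul _ _ h0
            rw [Finset.mem_union, vars_X, vars_X] at this
            simp only [Finset.mem_singleton] at this
            rcases this with rfl | rfl
            · omega
            · omega
        · have := ih (i+1) (j-1) hv'
          rw [Finset.mem_Icc] at this
          omega
      · have := vars_sum_subset _ _ hv
        rw [Finset.mem_biUnion] at this
        obtain ⟨k, hk, hvk⟩ := this
        simp only [Finset.mem_filter, Finset.mem_Icc] at hk
        have := vars_mul _ _ hvk
        rw [Finset.mem_union] at this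
        rcases this with hv' | hv'
        · have := vars_mul _ _ hv'
          rw [Finset.mem_union, vars_C] at this
          rcases this with h0 | h0
          · simp at h0
          · have := ih i k h0
            rw [Finset.mem_Icc] at this
            omega
        · have := ih (k+1) j hv'
          rw [Finset.mem_Icc] at this
          omega


def kill (F : Type) [Field F] (i j : ℕ) : Rng F →+* Rng F :=
  MvPolynomial.eval₂Hom (MvPolynomial.C : F →+* Rng F)
    (fun u => if u.1 = i ∧ u.2.2 = j then 0 else MvPolynomial.X u)

def sel (F : Type) [Field F] (i k j : ℕ) : Rng F →+* Polynomial (Rng F) :=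
  MvPolynomial.eval₂Hom ((Polynomial.C : Rng F →+* Polynomial (Rng F)).comp
      (MvPolynomial.C : F →+* Rng F))
    (fun u => if u = (i,k,j) then Polynomial.X
      else if u.1 = i ∧ u.2.2 = j then 0 else Polynomial.C (MvPolynomial.X u))

lemma kill_X (i j : ℕ) (u : ℕ × ℕ × ℕ) :
    kill F i j (MvPolynomial.X u) = if u.1 = i ∧ u.2.2 = j then 0 else MvPolynomial.X u := by
  simp [kill]

lemma sel_X (i k j : ℕ) (u : ℕ × ℕ × ℕ) :
    sel F i k j (MvPolynomial.X u) = (if u = (i,k,j) then Polynomial.X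
      else if u.1 = i ∧ u.2.2 = j then 0 else Polynomial.C (MvPolynomial.X u)) := by
  simp [sel]

lemma map_kill_RYp (fuel i j : ℕ) (hij : ¬ j < i) :
    map (kill F i j) (RYp F (fuel+1) i j) = (1 + X i * X j) * RYp F fuel (i+1) (j-1) := by
  rw [RYp]
  rw [if_neg hij]
  rw [map_add, map_mul, map_sum]
  have h1 : map (kill F i j) ((1 : MvPolynomial ℕ (Rng F)) + X i * X j) = 1 + X i * X j := by
    rw [map_add, map_one, map_mul, MvPolynomial.map_X, MvPolynomial.map_X]
  have h2 : map (kill F i j) (RYp F fuel (i+1) (j-1)) = RYp F fuel (i+1) (j-1) := by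
    have := map_RYp_congr (κ₁ := kill F i j) (κ₂ := RingHom.id (Rng F)) fuel (i+1) (j-1)
      (fun a b c h1 h2 h3 h4 => by
        rw [kill_X, if_neg (by simp; omega), RingHom.id_apply])
    rw [this, MvPolynomial.map_id]
  have h3 : ∀ k ∈ (Finset.Icc (i + 1) (j - 2)).filter (fun k => (k - i) % 2 = 1),
      map (kill F i j) (C (MvPolynomial.X (i, k, j)) * RYp F fuel i k * RYp F fuel (k + 1) j)
        = 0 := by
    intro k _
    rw [map_mul, map_mul, MvPolynomial.map_C, kill_X, if_pos ⟨rfl, rfl⟩, map_zero,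
      zero_mul, zero_mul]
  rw [h1, h2, Finset.sum_eq_zero h3, add_zero]

lemma map_sel_RYp (fuel i k j : ℕ) (hij : ¬ j < i)
    (hk : k ∈ (Finset.Icc (i + 1) (j - 2)).filter (fun k => (k - i) % 2 = 1)) :
    map (sel F i k j) (RYp F (fuel+1) i j) =
      map (Polynomial.C : Rng F →+* Polynomial (Rng F))
          ((1 + X i * X j) * RYp F fuel (i+1) (j-1))
        + C Polynomial.X *
          map (Polynomial.C : Rng F →+* Polynomial (Rng F))
            (RYp F fuel i k * RYp F fuel (k+1) j) := by
  have hkr : i + 1 ≤ k ∧ k ≤ j - 2 := Finset.mem_Icc.mp (Finset.mem_filter.mp hk).1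
  have hkj : k + 2 ≤ j := by omega
  rw [RYp, if_neg hij, map_add, map_mul, map_sum]
  have h1 : map (sel F i k j) ((1 : MvPolynomial ℕ (Rng F)) + X i * X j) = 1 + X i * X j := by
    rw [map_add, map_one, map_mul, MvPolynomial.map_X, MvPolynomial.map_X]
  have h2 : map (sel F i k j) (RYp F fuel (i+1) (j-1)) =
      map (Polynomial.C : Rng F →+* Polynomial (Rng F)) (RYp F fuel (i+1) (j-1)) :=
    map_RYp_congr fuel (i+1) (j-1) (fun a b c ha hb hc hd => by
      rw [sel_X, if_neg (by intro H; rw [Prod.ext_iff] at H; simp at H; omega),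
        if_neg (by simp; omega)])
  have h4 : map (sel F i k j) (RYp F fuel i k) =
      map (Polynomial.C : Rng F →+* Polynomial (Rng F)) (RYp F fuel i k) :=
    map_RYp_congr fuel i k (fun a b c ha hb hc hd => by
      rw [sel_X, if_neg (by intro H; rw [Prod.ext_iff] at H; simp at H; omega),
        if_neg (by simp; omega)])
  have h5 : map (sel F i k j) (RYp F fuel (k+1) j) =
      map (Polynomial.C : Rng F →+* Polynomial (Rng F)) (RYp F fuel (k+1) j) :=
    map_RYp_congr fuel (k+1) j (fun a b c ha hb hc hd => by
      rw [sel_X, if_neg (by intro H; rw [Prod.ext_iff] at H; simp at H; omega),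
        if_neg (by simp; omega)])
  have hsum : ∑ k' ∈ (Finset.Icc (i + 1) (j - 2)).filter (fun k' => (k' - i) % 2 = 1),
      map (sel F i k j) (C (MvPolynomial.X (i, k', j)) * RYp F fuel i k' * RYp F fuel (k' + 1) j)
      = C Polynomial.X *
          map (Polynomial.C : Rng F →+* Polynomial (Rng F))
            (RYp F fuel i k * RYp F fuel (k+1) j) := by
    rw [Finset.sum_eq_single_of_mem k hk]
    · rw [map_mul, map_mul, MvPolynomial.map_C, sel_X, if_pos rfl, h4, h5, map_mul, mul_assoc]
    · intro k' _ hne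
      rw [map_mul, map_mul, MvPolynomial.map_C, sel_X,
        if_neg (by intro H; rw [Prod.ext_iff] at H; simp at H; omega),
        if_pos ⟨rfl, rfl⟩, map_zero, zero_mul, zero_mul]
  rw [h1, h2, hsum, map_mul, map_mul]
  have h6 : map (Polynomial.C : Rng F →+* Polynomial (Rng F))
      ((1 : MvPolynomial ℕ (Rng F)) + X i * X j) = 1 + X i * X j := by
    rw [map_add, map_one, map_mul, MvPolynomial.map_X, MvPolynomial.map_X]
  rw [h6]



lemma RYp_len2 (fuel i : ℕ) : RYp F (fuel+1) i (i+1) = 1 + X i * X (i+1) := by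
  rw [RYp, if_neg (by omega)]
  have h1 : i + 1 - 1 = i := by omega
  rw [h1, RYp_empty fuel (i+1) i (by omega), mul_one]
  have h2 : Finset.Icc (i+1) (i+1-2) = ∅ := Finset.Icc_eq_empty (by omega)
  rw [h2, Finset.filter_empty, Finset.sum_empty, add_zero]

variable {h : ℕ}

lemma wit_empty (φ : ℕ → Fin h ⊕ Fin h) (fuel i j : ℕ) (hij : j < i) :
    Wit (pdm (rename φ (RYp F fuel i j))) (yS φ (Finset.Icc i j)) (zS φ (Finset.Icc i j))
      (2 ^ min (yS φ (Finset.Icc i j)).card (zS φ (Finset.Icc i j)).card) := by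
  have hempty : Finset.Icc i j = ∅ := Finset.Icc_eq_empty (by omega)
  have hy : yS φ (Finset.Icc i j) = ∅ := by rw [hempty]; ext x; simp [yS]
  have hz : zS φ (Finset.Icc i j) = ∅ := by rw [hempty]; ext x; simp [zS]
  rw [RYp_empty fuel i j hij, map_one, hy, hz]
  simp only [Finset.card_empty, Nat.min_self, pow_zero]
  exact wit_one_entry (by rw [coeff_zero_one]) ∅ ∅

lemma wit_mixed_pair {K : Type*} [CommRing K] [IsDomain K] (φ : ℕ → Fin h ⊕ Fin h)
    {i j : ℕ} (hij : i ≠ j) {a b : Fin h}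
    (hmix : (φ i = Sum.inl a ∧ φ j = Sum.inr b) ∨ (φ i = Sum.inr b ∧ φ j = Sum.inl a)) :
    Wit (pdm (rename φ ((1 : MvPolynomial ℕ K) + X i * X j))) (yS φ {i, j}) (zS φ {i, j}) 2 ∧
      yS φ ({i, j} : Finset ℕ) = {a} ∧ zS φ ({i, j} : Finset ℕ) = {b} := by
  have hpairu : ({i, j} : Finset ℕ) = {i} ∪ {j} := rfl
  have hren : rename φ ((1 : MvPolynomial ℕ K) + X i * X j)
      = 1 + X (φ i) * X (φ j) := by
    rw [map_add, map_one, map_mul, rename_X, rename_X]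
  rcases hmix with ⟨h1, h2⟩ | ⟨h1, h2⟩
  · have hy : yS φ ({i, j} : Finset ℕ) = {a} := by
      rw [hpairu, yS_union, yS_singleton_inl h1, yS_singleton_inr h2, Finset.union_empty]
    have hz : zS φ ({i, j} : Finset ℕ) = {b} := by
      rw [hpairu, zS_union, zS_singleton_inl h1, zS_singleton_inr h2, Finset.empty_union]
    refine ⟨?_, hy, hz⟩
    rw [hren, h1, h2, hy, hz]
    exact wit_base a b
  · have hy : yS φ ({i, j} : Finset ℕ) = {a} := by
      rw [hpairu, yS_union, yS_singleton_inr h1, yS_singleton_inl h2, Finset.empty_union]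
    have hz : zS φ ({i, j} : Finset ℕ) = {b} := by
      rw [hpairu, zS_union, zS_singleton_inr h1, zS_singleton_inl h2, Finset.union_empty]
    refine ⟨?_, hy, hz⟩
    rw [hren, h1, h2, mul_comm, hy, hz]
    exact wit_base a b

variable {N : ℕ}

lemma wit_opposite (φ : ℕ → Fin h ⊕ Fin h) (hinj : Set.InjOn φ (Set.Icc 1 N))
    {fuel i j : ℕ} (hi : 1 ≤ i) (hj : j ≤ N) (hij : i + 1 ≤ j) {a b : Fin h}
    (hmix : (φ i = Sum.inl a ∧ φ j = Sum.inr b) ∨ (φ i = Sum.inr b ∧ φ j = Sum.inl a))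
    (wmid : Wit (pdm (rename φ (RYp F fuel (i+1) (j-1))))
      (yS φ (Finset.Icc (i+1) (j-1))) (zS φ (Finset.Icc (i+1) (j-1)))
      (2 ^ min (yS φ (Finset.Icc (i+1) (j-1))).card (zS φ (Finset.Icc (i+1) (j-1))).card)) :
    Wit (pdm (rename φ (RYp F (fuel+1) i j))) (yS φ (Finset.Icc i j)) (zS φ (Finset.Icc i j))
      (2 ^ min (yS φ (Finset.Icc i j)).card (zS φ (Finset.Icc i j)).card) := by
  have hsub1 : ({i, j} : Finset ℕ) ⊆ Finset.Icc 1 N := by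
    intro x hx
    simp only [Finset.mem_insert, Finset.mem_singleton] at hx
    simp only [Finset.mem_Icc]
    omega
  have hsub2 : Finset.Icc (i+1) (j-1) ⊆ Finset.Icc 1 N := by
    intro x hx
    simp only [Finset.mem_Icc] at hx ⊢
    omega
  have hIdisj : Disjoint ({i, j} : Finset ℕ) (Finset.Icc (i+1) (j-1)) := by
    rw [Finset.disjoint_left]
    intro x hx hx2
    simp only [Finset.mem_insert, Finset.mem_singleton] at hx
    simp only [Finset.mem_Icc] at hx2
    omega
  have hIunion : Finset.Icc i j = ({i, j} : Finset ℕ) ∪ Finset.Icc (i+1) (j-1) := by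
    ext x
    simp only [Finset.mem_Icc, Finset.mem_union, Finset.mem_insert, Finset.mem_singleton]
    omega
  obtain ⟨w1, hy1, hz1⟩ := wit_mixed_pair (K := Rng F) φ (by omega) hmix
  have hv1 := support_rename_sub (K := Rng F) φ (1 + X i * X j) {i, j}
    (vars_one_add_X_mul_X i j)
  have hv2 := support_rename_sub (K := Rng F) φ (RYp F fuel (i+1) (j-1))
    (Finset.Icc (i+1) (j-1)) (vars_RYp fuel (i+1) (j-1))
  have hYd := yS_disjoint hinj hsub1 hsub2 hIdisj
  have hZd := zS_disjoint hinj hsub1 hsub2 hIdisj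
  have hmul := Wit.mul hv1 hv2 hYd hZd w1 wmid
  rw [← map_mul] at hmul
  -- cards
  have hYeq : yS φ (Finset.Icc i j) = yS φ {i, j} ∪ yS φ (Finset.Icc (i+1) (j-1)) := by
    rw [hIunion, yS_union]
  have hZeq : zS φ (Finset.Icc i j) = zS φ {i, j} ∪ zS φ (Finset.Icc (i+1) (j-1)) := by
    rw [hIunion, zS_union]
  have hycard : (yS φ (Finset.Icc i j)).card = 1 + (yS φ (Finset.Icc (i+1) (j-1))).card := by
    rw [hYeq, Finset.card_union_of_disjoint hYd, hy1, Finset.card_singleton]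
  have hzcard : (zS φ (Finset.Icc i j)).card = 1 + (zS φ (Finset.Icc (i+1) (j-1))).card := by
    rw [hZeq, Finset.card_union_of_disjoint hZd, hz1, Finset.card_singleton]
  have hsize : 2 ^ min (yS φ (Finset.Icc i j)).card (zS φ (Finset.Icc i j)).card
      = 2 * 2 ^ min (yS φ (Finset.Icc (i+1) (j-1))).card
          (zS φ (Finset.Icc (i+1) (j-1))).card := by
    rw [hycard, hzcard]
    have : min (1 + (yS φ (Finset.Icc (i+1) (j-1))).card)
        (1 + (zS φ (Finset.Icc (i+1) (j-1))).card)
        = min (yS φ (Finset.Icc (i+1) (j-1))).card (zS φ (Finset.Icc (i+1) (j-1))).card + 1 := by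
      omega
    rw [this, pow_succ, mul_comm]
  rw [hsize, hYeq, hZeq]
  refine Wit.of_map (kill F i j) ?_
  rw [← pdm_map, MvPolynomial.map_rename, map_kill_RYp fuel i j (by omega)]
  exact hmul

lemma wit_sameside (φ : ℕ → Fin h ⊕ Fin h) (hinj : Set.InjOn φ (Set.Icc 1 N))
    {fuel i j k : ℕ} (hi : 1 ≤ i) (hj : j ≤ N) (hk1 : i + 1 ≤ k) (hk2 : k ≤ j - 2)
    (hkpar : (k - i) % 2 = 1) (hlen4 : i + 3 ≤ j)
    (hmin : min (yS φ (Finset.Icc i k)).card (zS φ (Finset.Icc i k)).card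
        + min (yS φ (Finset.Icc (k+1) j)).card (zS φ (Finset.Icc (k+1) j)).card
        = min (yS φ (Finset.Icc i j)).card (zS φ (Finset.Icc i j)).card)
    (w1 : Wit (pdm (rename φ (RYp F fuel i k))) (yS φ (Finset.Icc i k))
        (zS φ (Finset.Icc i k))
        (2 ^ min (yS φ (Finset.Icc i k)).card (zS φ (Finset.Icc i k)).card))
    (w2 : Wit (pdm (rename φ (RYp F fuel (k+1) j))) (yS φ (Finset.Icc (k+1) j))
        (zS φ (Finset.Icc (k+1) j))
        (2 ^ min (yS φ (Finset.Icc (k+1) j)).card (zS φ (Finset.Icc (k+1) j)).card)) :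
    Wit (pdm (rename φ (RYp F (fuel+1) i j))) (yS φ (Finset.Icc i j)) (zS φ (Finset.Icc i j))
      (2 ^ min (yS φ (Finset.Icc i j)).card (zS φ (Finset.Icc i j)).card) := by
  have hsub1 : Finset.Icc i k ⊆ Finset.Icc 1 N := by
    intro x hx
    simp only [Finset.mem_Icc] at hx ⊢
    omega
  have hsub2 : Finset.Icc (k+1) j ⊆ Finset.Icc 1 N := by
    intro x hx
    simp only [Finset.mem_Icc] at hx ⊢
    omega
  have hv1 := support_rename_sub (K := Rng F) φ (RYp F fuel i k) (Finset.Icc i k)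
    (vars_RYp fuel i k)
  have hv2 := support_rename_sub (K := Rng F) φ (RYp F fuel (k+1) j) (Finset.Icc (k+1) j)
    (vars_RYp fuel (k+1) j)
  have hYd := yS_disjoint hinj hsub1 hsub2 (Icc_disj i k j)
  have hZd := zS_disjoint hinj hsub1 hsub2 (Icc_disj i k j)
  have hmul := Wit.mul hv1 hv2 hYd hZd w1 w2
  rw [← map_mul] at hmul
  have hIunion : Finset.Icc i j = Finset.Icc i k ∪ Finset.Icc (k+1) j :=
    Icc_split i k j (by omega) (by omega)
  have hYeq : yS φ (Finset.Icc i j) = yS φ (Finset.Icc i k) ∪ yS φ (Finset.Icc (k+1) j) := by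
    rw [hIunion, yS_union]
  have hZeq : zS φ (Finset.Icc i j) = zS φ (Finset.Icc i k) ∪ zS φ (Finset.Icc (k+1) j) := by
    rw [hIunion, zS_union]
  rw [← hmin, pow_add, hYeq, hZeq]
  obtain ⟨e, f, he, hf, hYe, hZf, hd⟩ := hmul
  refine ⟨e, f, he, hf, hYe, hZf, ?_⟩
  intro H0
  apply hd
  have hkmem : k ∈ (Finset.Icc (i + 1) (j - 2)).filter (fun k => (k - i) % 2 = 1) := by
    rw [Finset.mem_filter, Finset.mem_Icc]
    exact ⟨⟨hk1, hk2⟩, hkpar⟩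
  have hmapsel := map_sel_RYp (F := F) fuel i k j (by omega) hkmem
  set Q := pdm (rename φ (RYp F (fuel+1) i j)) with hQ
  set PA := pdm (rename φ ((1 + X i * X j) * RYp F fuel (i+1) (j-1))) with hPA
  set PB := pdm (rename φ (RYp F fuel i k * RYp F fuel (k+1) j)) with hPB
  have hpoly2 : map (sel F i k j) (rename φ (RYp F (fuel+1) i j))
      = map (Polynomial.C : Rng F →+* Polynomial (Rng F))
          (rename φ ((1 + X i * X j) * RYp F fuel (i+1) (j-1)))
        + C Polynomial.X * map (Polynomial.C : Rng F →+* Polynomial (Rng F))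
            (rename φ (RYp F fuel i k * RYp F fuel (k+1) j)) := by
    rw [MvPolynomial.map_rename, hmapsel]
    rw [map_add (rename φ) _ _]
    rw [map_mul (rename φ) (C Polynomial.X) _, rename_C]
    rw [← MvPolynomial.map_rename, ← MvPolynomial.map_rename]
  have hQsel : Q.map (sel F i k j) =
      Matrix.of (fun S T => Polynomial.C (PA S T) + Polynomial.X * Polynomial.C (PB S T)) := by
    rw [hQ, ← pdm_map, hpoly2]
    ext S T
    rw [Matrix.of_apply, pdm_apply, coeff_add, coeff_C_mul, coeff_map, coeff_map]
    rfl
  have hdetmap : sel F i k j ((Q.submatrix e f).det)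
      = (Matrix.of (fun x y => Polynomial.C ((PA.submatrix e f) x y)
          + Polynomial.X * Polynomial.C ((PB.submatrix e f) x y))).det := by
    rw [RingHom.map_det]
    congr 1
    ext x y
    rw [RingHom.mapMatrix_apply]
    have : (Q.submatrix e f).map (sel F i k j) = (Q.map (sel F i k j)).submatrix e f := by
      rw [Matrix.submatrix_map]
    rw [this, hQsel]
    rfl
  have hco := coeff_det_top (PA.submatrix e f) (PB.submatrix e f)
  rw [← hdetmap, H0, map_zero, Polynomial.coeff_zero] at hco
  exact hco.symm

lemma wit_len2_same (φ : ℕ → Fin h ⊕ Fin h) {i : ℕ}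
    (hside : (∃ a a', φ i = Sum.inl a ∧ φ (i+1) = Sum.inl a') ∨
             (∃ b b', φ i = Sum.inr b ∧ φ (i+1) = Sum.inr b')) (fuel : ℕ) :
    Wit (pdm (rename φ (RYp F (fuel+1) i (i+1)))) (yS φ (Finset.Icc i (i+1)))
      (zS φ (Finset.Icc i (i+1)))
      (2 ^ min (yS φ (Finset.Icc i (i+1))).card (zS φ (Finset.Icc i (i+1))).card) := by
  have hpair : Finset.Icc i (i+1) = ({i, i+1} : Finset ℕ) := by
    ext x
    simp only [Finset.mem_Icc, Finset.mem_insert, Finset.mem_singleton]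
    omega
  have hpairu : ({i, i+1} : Finset ℕ) = {i} ∪ {i+1} := rfl
  have hmin0 : min (yS φ (Finset.Icc i (i+1))).card (zS φ (Finset.Icc i (i+1))).card = 0 := by
    rcases hside with ⟨a, a', h1, h2⟩ | ⟨b, b', h1, h2⟩
    · have : zS φ (Finset.Icc i (i+1)) = ∅ := by
        rw [hpair, hpairu, zS_union, zS_singleton_inl h1, zS_singleton_inl h2,
          Finset.union_empty]
      rw [this, Finset.card_empty, Nat.min_zero]
    · have : yS φ (Finset.Icc i (i+1)) = ∅ := by
        rw [hpair, hpairu, yS_union, yS_singleton_inr h1, yS_singleton_inr h2,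
          Finset.union_empty]
      rw [this, Finset.card_empty, Nat.zero_min]
  rw [hmin0, pow_zero, RYp_len2]
  refine wit_one_entry ?_ _ _
  rw [map_add, map_one, map_mul, rename_X, rename_X]
  exact coeff_zero_one_add_X_mul_X _ _

lemma main_wit (φ : ℕ → Fin h ⊕ Fin h) (hinj : Set.InjOn φ (Set.Icc 1 N)) :
    ∀ fuel i j, 1 ≤ i → j ≤ N → j + 1 ≤ i + 2 * fuel →
      (j < i ∨ (j - i) % 2 = 1) →
      Wit (pdm (rename φ (RYp F fuel i j))) (yS φ (Finset.Icc i j)) (zS φ (Finset.Icc i j))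
        (2 ^ min (yS φ (Finset.Icc i j)).card (zS φ (Finset.Icc i j)).card) := by
  intro fuel
  induction fuel with
  | zero =>
    intro i j hi hj hlen _
    exact wit_empty φ 0 i j (by omega)
  | succ fuel ih =>
    intro i j hi hj hlen hpar
    by_cases hij : j < i
    · exact wit_empty φ (fuel+1) i j hij
    · have hpar' : (j - i) % 2 = 1 := by
        rcases hpar with hh | hh
        · omega
        · exact hh
      have hiltj : i + 1 ≤ j := by omega
      cases hpi : φ i with
      | inl a =>
        cases hpj : φ j with
        | inl a2 =>
          by_cases hlen2 : j = i + 1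
          · subst hlen2
            exact wit_len2_same φ (Or.inl ⟨a, a2, hpi, hpj⟩) fuel
          · have hlen4 : i + 3 ≤ j := by omega
            obtain ⟨k, ⟨hk1, hk2⟩, hkpar, hmin⟩ := exists_split hinj hi hj hlen4 hpar'
              (Or.inl ⟨a, a2, hpi, hpj⟩)
            exact wit_sameside φ hinj hi hj hk1 hk2 hkpar hlen4 hmin
              (ih i k hi (by omega) (by omega) (Or.inr hkpar))
              (ih (k+1) j (by omega) hj (by omega) (Or.inr (by omega)))
        | inr b =>
          exact wit_opposite φ hinj hi hj hiltj (Or.inl ⟨hpi, hpj⟩)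
            (ih (i+1) (j-1) (by omega) (by omega) (by omega) (by omega))
      | inr b =>
        cases hpj : φ j with
        | inl a =>
          exact wit_opposite φ hinj hi hj hiltj (Or.inr ⟨hpi, hpj⟩)
            (ih (i+1) (j-1) (by omega) (by omega) (by omega) (by omega))
        | inr b2 =>
          by_cases hlen2 : j = i + 1
          · subst hlen2
            exact wit_len2_same φ (Or.inr ⟨b, b2, hpi, hpj⟩) fuel
          · have hlen4 : i + 3 ≤ j := by omega
            obtain ⟨k, ⟨hk1, hk2⟩, hkpar, hmin⟩ := exists_split hinj hi hj hlen4 hpar'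
              (Or.inr ⟨b, b2, hpi, hpj⟩)
            exact wit_sameside φ hinj hi hj hk1 hk2 hkpar hlen4 hmin
              (ih i k hi (by omega) (by omega) (Or.inr hkpar))
              (ih (k+1) j (by omega) hj (by omega) (Or.inr (by omega)))


end RYpoly

end RYFR

end RazYehudayoffProof

/-- The Raz–Yehudayoff polynomial has a full-rank partial derivative matrix
under every partition of its variables. -/
theorem razPoly_full_rank (F : Type) [Field F] (N h : ℕ) (hN : N = 2 * h)
    (φ : ℕ → Fin h ⊕ Fin h) (hφ : Set.BijOn φ (Set.Icc 1 N) Set.univ) :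
    (pdm (rename φ (razPoly F N))).rank = 2 ^ h := by
  classical
  have hinj : Set.InjOn φ (Set.Icc 1 N) := hφ.injOn
  have hwit := RYFR.main_wit (F := F) φ hinj N 1 N (by omega) le_rfl (by omega) (by omega)
  have hyU : RYFR.yS φ (Finset.Icc 1 N) = Finset.univ := by
    ext a
    simp only [Finset.mem_univ, iff_true]
    rw [RYFR.mem_yS]
    obtain ⟨x, hx, hxa⟩ := hφ.surjOn (Set.mem_univ (Sum.inl a))
    exact ⟨x, by simpa [Finset.mem_Icc] using hx, hxa⟩
  have hzU : RYFR.zS φ (Finset.Icc 1 N) = Finset.univ := by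
    ext b
    simp only [Finset.mem_univ, iff_true]
    rw [RYFR.mem_zS]
    obtain ⟨x, hx, hxa⟩ := hφ.surjOn (Set.mem_univ (Sum.inr b))
    exact ⟨x, by simpa [Finset.mem_Icc] using hx, hxa⟩
  rw [hyU, hzU] at hwit
  have hcard : (Finset.univ : Finset (Fin h)).card = h := by simp
  rw [hcard, min_self] at hwit
  have hpoly : rename φ (razPoly F N)
      = map (algebraMap (RYFR.Rng F) (Gf F)) (rename φ (RYFR.RYp F N 1 N)) := by
    rw [MvPolynomial.map_rename, RYFR.map_RYp]
    rfl
  have hwit2 : RYFR.Wit (pdm (rename φ (razPoly F N))) Finset.univ Finset.univ (2 ^ h) := by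
    obtain ⟨e, f, he, hf, hYe, hZf, hd⟩ := hwit
    refine ⟨e, f, he, hf, fun a => Finset.subset_univ _, fun a => Finset.subset_univ _, ?_⟩
    rw [hpoly, RYFR.pdm_map, Matrix.submatrix_map, ← RingHom.mapMatrix_apply, ← RingHom.map_det]
    intro H
    apply hd
    exact (IsFractionRing.injective (RYFR.Rng F) (Gf F)) (by rw [H, map_zero])
  have hub : (pdm (rename φ (razPoly F N))).rank ≤ 2 ^ h := by
    refine le_trans (Matrix.rank_le_card_height _) ?_
    rw [Fintype.card_finset, Fintype.card_fin]
  exact le_antisymm hub (RYFR.rank_ge_of_wit hwit2)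

end
end
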